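/- arXiv:0901.3749 — 8 statements merged into one kernel-verified Lean document; each statement's English description precedes it below -/
import Mathlib

section
/- For a string function p : Σ* → ℝ and d ∈ ℕ, the following are equivalent: (i) dim p ≤ d; (ii) there exist vectors x, y ∈ ℝ^d and matrices T_a ∈ ℝ^{d×d} for all a ∈ Σ such that p(v = a_1…a_n) = yᵀ T_{a_n}···T_{a_1} x for all v ∈ Σ* (in particular p(□) = yᵀx). -/
open Matrix

/-- The column `p^w` of the Hankel matrix of `p`, as a function `v ↦ p(wv)`. -/
def hankelCol {A : Type*} (p : List A → ℝ) (w : List A) : List A → ℝ :=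
  fun v => p (w ++ v)

/-- The dimension of a string function: the rank of its Hankel matrix, i.e. the dimension
of the span of its columns `{p^w : w ∈ Σ*}` in `ℝ^{Σ*}`. -/
noncomputable def sfDim {A : Type*} (p : List A → ℝ) : Cardinal :=
  Module.rank ℝ ↥(Submodule.span ℝ (Set.range (hankelCol p)))

/-- For `v = a₁…aₙ`, the product `T_{aₙ} ⋯ T_{a₁}`. -/
def wordProd {A R : Type*} [Semiring R] {d : ℕ}
    (T : A → Matrix (Fin d) (Fin d) R) (v : List A) : Matrix (Fin d) (Fin d) R :=
  (v.reverse.map T).prod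

lemma wordProd_nil {A R : Type*} [Semiring R] {d : ℕ} (T : A → Matrix (Fin d) (Fin d) R) :
    wordProd T [] = 1 := rfl

lemma wordProd_cons {A R : Type*} [Semiring R] {d : ℕ} (T : A → Matrix (Fin d) (Fin d) R)
    (a : A) (v : List A) : wordProd T (a :: v) = wordProd T v * T a := by
  simp [wordProd, List.reverse_cons]

lemma wordProd_append {A R : Type*} [Semiring R] {d : ℕ} (T : A → Matrix (Fin d) (Fin d) R)
    (w v : List A) : wordProd T (w ++ v) = wordProd T v * wordProd T w := by
  simp [wordProd, List.reverse_append]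

/-- The shift operator `f ↦ (v ↦ f (a :: v))` as a linear map. -/
def shiftMap {A : Type*} (a : A) : (List A → ℝ) →ₗ[ℝ] (List A → ℝ) where
  toFun f := fun v => f (a :: v)
  map_add' _ _ := rfl
  map_smul' _ _ := rfl

/-- `dim p ≤ d` iff `p` admits a linear representation
`p(a₁…aₙ) = yᵀ T_{aₙ} ⋯ T_{a₁} x` of size `d`. -/
theorem stmt1 {A : Type*} [Fintype A] [Nonempty A] (p : List A → ℝ) (d : ℕ) :
    sfDim p ≤ (d : Cardinal) ↔
      ∃ (x y : Fin d → ℝ) (T : A → Matrix (Fin d) (Fin d) ℝ),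
        ∀ v : List A, p v = y ⬝ᵥ (wordProd T v) *ᵥ x := by
  constructor
  · intro hdim
    set V := Submodule.span ℝ (Set.range (hankelCol p)) with hV
    -- V is finite dimensional of finrank ≤ d
    haveI : Module.Free ℝ V := Module.Free.of_divisionRing ℝ V
    haveI : Module.Finite ℝ V :=
      Module.rank_lt_aleph0_iff.mp (lt_of_le_of_lt hdim (Cardinal.nat_lt_aleph0 d))
    have hn : Module.finrank ℝ V ≤ d := Module.finrank_le_of_rank_le hdim
    set n := Module.finrank ℝ V with hndef
    let b : Module.Basis (Fin n) ℝ V := Module.finBasis ℝ V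
    -- injection ι : V → (Fin d → ℝ) and retraction ρ
    let ι : V →ₗ[ℝ] (Fin d → ℝ) :=
      { toFun := fun u i => if h : (i : ℕ) < n then b.repr u ⟨i, h⟩ else 0
        map_add' := by intro u v; funext i; by_cases h : (i : ℕ) < n <;> simp [h]
        map_smul' := by intro c u; funext i; by_cases h : (i : ℕ) < n <;> simp [h] }
    let ρ : (Fin d → ℝ) →ₗ[ℝ] V :=
      b.equivFun.symm.toLinearMap.comp (LinearMap.funLeft ℝ ℝ (Fin.castLE hn))
    have hρι : ∀ u : V, ρ (ι u) = u := by
      intro u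
      have : (LinearMap.funLeft ℝ ℝ (Fin.castLE hn)) (ι u) = b.equivFun u := by
        funext j
        simp only [LinearMap.funLeft_apply, ι, LinearMap.coe_mk, AddHom.coe_mk]
        have hj : ((Fin.castLE hn j : Fin d) : ℕ) < n := by simp
        rw [dif_pos hj]
        simp [Module.Basis.equivFun_apply]
      simp only [ρ, LinearMap.comp_apply, this]
      exact b.equivFun.symm_apply_apply u
    -- shift maps preserve V
    have hshift : ∀ (a : A) (f : List A → ℝ), f ∈ V → shiftMap a f ∈ V := by
      intro a
      have : V.map (shiftMap a) ≤ V := by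
        rw [hV, Submodule.map_span, Submodule.span_le]
        rintro _ ⟨_, ⟨w, rfl⟩, rfl⟩
        apply Submodule.subset_span
        refine ⟨w ++ [a], ?_⟩
        funext v
        simp [hankelCol, shiftMap, List.append_assoc]
      intro f hf
      exact this (Submodule.mem_map_of_mem hf)
    let σ : A → (V →ₗ[ℝ] V) := fun a => (shiftMap a).restrict (hshift a)
    -- p itself is in V
    have hpV : p ∈ V := by
      apply Submodule.subset_span
      exact ⟨[], by funext v; simp [hankelCol]⟩
    let pb : V := ⟨p, hpV⟩
    -- evaluation at [] composed with ρ
    let ev : V →ₗ[ℝ] ℝ := (LinearMap.proj ([] : List A)).comp V.subtype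
    let g : (Fin d → ℝ) →ₗ[ℝ] ℝ := ev.comp ρ
    let L : A → ((Fin d → ℝ) →ₗ[ℝ] (Fin d → ℝ)) := fun a => (ι.comp (σ a)).comp ρ
    refine ⟨ι pb, fun i => g fun j => if i = j then 1 else 0,
      fun a => LinearMap.toMatrix' (L a), ?_⟩
    have hg : ∀ z : Fin d → ℝ, (fun i => g fun j => if i = j then 1 else 0) ⬝ᵥ z = g z := by
      intro z
      rw [LinearMap.pi_apply_eq_sum_univ g z]
      simp [dotProduct, mul_comm]
    have hT : ∀ (a : A) (u : V), LinearMap.toMatrix' (L a) *ᵥ ι u = ι (σ a u) := by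
      intro a u
      rw [← Matrix.toLin'_apply, Matrix.toLin'_toMatrix']
      simp [L, hρι]
    have key : ∀ (v : List A) (u : V),
        (fun i => g fun j => if i = j then 1 else 0) ⬝ᵥ
          (wordProd (fun a => LinearMap.toMatrix' (L a)) v) *ᵥ ι u = (u : List A → ℝ) v := by
      intro v
      induction v with
      | nil =>
          intro u
          rw [wordProd_nil, Matrix.one_mulVec, hg]
          simp [g, ev, hρι]
      | cons a v ih =>
          intro u
          rw [wordProd_cons, ← Matrix.mulVec_mulVec, hT a u, ih (σ a u)]
          rfl
    intro v
    exact (key v pb).symm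
  · rintro ⟨x, y, T, hp⟩
    -- the map z ↦ (v ↦ y ⬝ᵥ wordProd T v *ᵥ z)
    let φ : (Fin d → ℝ) →ₗ[ℝ] (List A → ℝ) :=
      { toFun := fun z v => y ⬝ᵥ (wordProd T v) *ᵥ z
        map_add' := by intro z w; funext v; simp [Matrix.mulVec_add, dotProduct_add]
        map_smul' := by intro c z; funext v; simp [Matrix.mulVec_smul] }
    have hsub : Submodule.span ℝ (Set.range (hankelCol p)) ≤ LinearMap.range φ := by
      rw [Submodule.span_le]
      rintro _ ⟨w, rfl⟩
      refine ⟨(wordProd T w) *ᵥ x, ?_⟩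
      funext v
      simp only [φ, LinearMap.coe_mk, AddHom.coe_mk]
      rw [Matrix.mulVec_mulVec, ← wordProd_append]
      exact (hp (w ++ v)).symm
    calc sfDim p ≤ Module.rank ℝ (LinearMap.range φ) := Submodule.rank_mono hsub
      _ ≤ (d : Cardinal) := by
        have h := lift_rank_range_le φ
        rw [rank_fin_fun, Cardinal.lift_natCast] at h
        simpa using h
end

section
/- Let p : Σ* → ℝ be a string function with dim p ≤ d. Then the following are equivalent: (i) p is a GUSSF, i.e., Σ_{a∈Σ} p(va) = p(v) for all v ∈ Σ*; (ii) there exist vectors x, y ∈ ℝ^d and matrices T_a ∈ ℝ^{d×d} for all a ∈ Σ such that p(v = a_1…a_n) = yᵀ T_{a_n}···T_{a_1} x for all v ∈ Σ*, and moreover yᵀ (Σ_{a∈Σ} T_a) = yᵀ. -/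
open Matrix

lemma exists_retraction (V : Type*) [AddCommGroup V] [Module ℝ V] [FiniteDimensional ℝ V]
    (d : ℕ) (h : Module.finrank ℝ V ≤ d) :
    ∃ (ι : V →ₗ[ℝ] (Fin d → ℝ)) (π : (Fin d → ℝ) →ₗ[ℝ] V), ∀ f, π (ι f) = f := by
  set n := Module.finrank ℝ V with hn
  let b : Module.Basis (Fin n) ℝ V := Module.finBasis ℝ V
  let e : V ≃ₗ[ℝ] (Fin n → ℝ) := b.equivFun
  let ι : V →ₗ[ℝ] (Fin d → ℝ) :=
    (Function.ExtendByZero.linearMap ℝ (Fin.castLE h)).comp e.toLinearMap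
  let π : (Fin d → ℝ) →ₗ[ℝ] V :=
    e.symm.toLinearMap.comp (LinearMap.funLeft ℝ ℝ (Fin.castLE h))
  refine ⟨ι, π, fun f => ?_⟩
  have : (LinearMap.funLeft ℝ ℝ (Fin.castLE h)) (ι f) = e f := by
    funext j
    simp only [ι, LinearMap.funLeft_apply, LinearMap.comp_apply,
      Function.ExtendByZero.linearMap_apply]
    rw [Function.Injective.extend_apply (Fin.castLE_injective h)]; rfl
  simp [π, this]

lemma wordProd_append_singleton {A R : Type*} [Semiring R] {d : ℕ}
    (T : A → Matrix (Fin d) (Fin d) R) (v : List A) (a : A) :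
    wordProd T (v ++ [a]) = T a * wordProd T v := by
  simp [wordProd, List.reverse_append]


lemma mySumMulVec {A n : Type*} [Fintype A] [Fintype n] (M : A → Matrix n n ℝ) (w : n → ℝ) :
    (∑ a : A, M a) *ᵥ w = ∑ a : A, M a *ᵥ w := by
  funext j
  simp only [Matrix.mulVec, dotProduct, Finset.sum_apply, Matrix.sum_apply, Finset.sum_mul]
  rw [Finset.sum_comm]

lemma mySumDot {A n : Type*} [Fintype A] [Fintype n] (y : n → ℝ) (f : A → n → ℝ) :
    y ⬝ᵥ (∑ a : A, f a) = ∑ a : A, y ⬝ᵥ f a := by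
  simp only [dotProduct, Finset.sum_apply, Finset.mul_sum]
  rw [Finset.sum_comm]

/-- For `p` with `dim p ≤ d`: `p` is a GUSSF iff it admits a size-`d`
linear representation `p(a₁…aₙ) = yᵀ T_{aₙ} ⋯ T_{a₁} x` with `yᵀ (∑_a T_a) = yᵀ`. -/
theorem stmt2 {A : Type*} [Fintype A] [Nonempty A] (p : List A → ℝ) (d : ℕ)
    (hdim : sfDim p ≤ (d : Cardinal)) :
    (∀ v : List A, ∑ a : A, p (v ++ [a]) = p v) ↔
      ∃ (x y : Fin d → ℝ) (T : A → Matrix (Fin d) (Fin d) ℝ),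
        (∀ v : List A, p v = y ⬝ᵥ (wordProd T v) *ᵥ x) ∧
        y ᵥ* (∑ a : A, T a) = y := by
  constructor
  · intro hg
    set V : Submodule ℝ (List A → ℝ) := Submodule.span ℝ (Set.range (hankelCol p)) with hV
    -- finite dimensionality
    haveI hfree : Module.Free ℝ ↥V := Module.Free.of_divisionRing ℝ ↥V
    have hfin : FiniteDimensional ℝ V :=
      Module.rank_lt_aleph0_iff.mp (lt_of_le_of_lt hdim (Cardinal.nat_lt_aleph0 d))
    have hrk : Module.finrank ℝ V ≤ d := Module.finrank_le_of_rank_le hdim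
    obtain ⟨ι, π, hπι⟩ := exists_retraction V d hrk
    -- shift maps
    have hmem : ∀ w : List A, hankelCol p w ∈ V := fun w => Submodule.subset_span ⟨w, rfl⟩
    have hshift : ∀ (a : A) (w : List A),
        (LinearMap.funLeft ℝ ℝ (List.cons a)) (hankelCol p w) = hankelCol p (w ++ [a]) := by
      intro a w; funext u; simp [hankelCol]
    have hmapsTo : ∀ a : A, ∀ g ∈ V, (LinearMap.funLeft ℝ ℝ (List.cons a)) g ∈ V := by
      intro a g hgV
      have : V.map (LinearMap.funLeft ℝ ℝ (List.cons a)) ≤ V := by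
        rw [hV, Submodule.map_span, Submodule.span_le]
        rintro - ⟨-, ⟨w, rfl⟩, rfl⟩
        rw [hshift a w]
        exact hmem (w ++ [a])
      exact this ⟨g, hgV, rfl⟩
    let σ : A → (V →ₗ[ℝ] V) := fun a =>
      (LinearMap.funLeft ℝ ℝ (List.cons a)).restrict (hmapsTo a)
    have hσ : ∀ (a : A) (g : V) (u : List A), ((σ a g : List A → ℝ)) u = (g : List A → ℝ) (a :: u) :=
      fun a g u => rfl
    -- GUSSF on V
    have hgV : ∀ g ∈ V, ∑ a : A, (g : List A → ℝ) [a] = g ([] : List A) := by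
      intro g hgV
      induction hgV using Submodule.span_induction with
      | mem g hgmem =>
        obtain ⟨w, rfl⟩ := hgmem
        simpa [hankelCol] using hg w
      | zero => simp
      | add g₁ g₂ _ _ ih1 ih2 => simp [Finset.sum_add_distrib, ih1, ih2]
      | smul c g _ ih =>
        simp only [Pi.smul_apply, smul_eq_mul]
        rw [← Finset.mul_sum, ih]
    -- definitions of x, y, T
    let T : A → Matrix (Fin d) (Fin d) ℝ := fun a =>
      LinearMap.toMatrix' (ι ∘ₗ σ a ∘ₗ π)
    have hT : ∀ (a : A) (c : Fin d → ℝ), T a *ᵥ c = ι (σ a (π c)) := by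
      intro a c
      rw [show T a *ᵥ c = Matrix.toLin' (T a) c from rfl]
      simp [T, Matrix.toLin'_toMatrix']
    let ev : V →ₗ[ℝ] ℝ := (LinearMap.proj ([] : List A)).comp V.subtype
    let x : Fin d → ℝ := ι ⟨hankelCol p [], hmem []⟩
    let y : Fin d → ℝ := fun i => ev (π (Pi.single i 1))
    have hy : ∀ c : Fin d → ℝ, y ⬝ᵥ c = ev (π c) := by
      intro c
      have h := LinearMap.pi_apply_eq_sum_univ (ev.comp π) c
      simp only [LinearMap.comp_apply] at h
      rw [h]
      have hs : ∀ i : Fin d, (fun j => if i = j then (1:ℝ) else 0) = Pi.single i 1 := by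
        intro i; funext j; simp [Pi.single_apply, eq_comm]
      simp only [hs]
      simp [dotProduct, y, mul_comm]
    -- key product formula
    have hkey : ∀ v : List A, wordProd T v *ᵥ x = ι ⟨hankelCol p v, hmem v⟩ := by
      intro v
      induction v using List.reverseRecOn with
      | nil => simp [wordProd, x]
      | append_singleton v a ih =>
        rw [wordProd_append_singleton, ← Matrix.mulVec_mulVec, ih, hT, hπι]
        congr 1
        apply Subtype.ext
        funext u
        rw [hσ]
        simp [hankelCol]
    refine ⟨x, y, T, fun v => ?_, ?_⟩
    · rw [hkey v, hy, hπι]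
      simp [ev, hankelCol]
    · funext i
      have h1 : (y ᵥ* ∑ a : A, T a) i = ∑ a : A, y ⬝ᵥ (T a *ᵥ Pi.single i 1) := by
        have : (y ᵥ* ∑ a : A, T a) i = (y ᵥ* ∑ a : A, T a) ⬝ᵥ Pi.single i 1 := by
          rw [dotProduct_single, mul_one]
        rw [this, ← Matrix.dotProduct_mulVec, mySumMulVec, mySumDot]
      rw [h1]
      have h2 : ∀ a : A, y ⬝ᵥ (T a *ᵥ Pi.single i 1) =
          ((π (Pi.single i 1) : List A → ℝ)) [a] := by
        intro a
        rw [hT, hy, hπι]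
        exact hσ a _ []
      simp only [h2]
      rw [hgV _ (π (Pi.single i 1)).2]
      rfl
  · rintro ⟨x, y, T, hrep, hy⟩ v
    have hterm : ∀ a : A, p (v ++ [a]) = y ⬝ᵥ (T a *ᵥ (wordProd T v *ᵥ x)) := by
      intro a
      rw [hrep, wordProd_append_singleton, ← Matrix.mulVec_mulVec]
    simp only [hterm]
    rw [← mySumDot, ← mySumMulVec, Matrix.dotProduct_mulVec, hy]
    exact (hrep v).symm
end

section
/- Let d ≥ 1 and let p₁, p₂ : Σ* → ℝ be string functions with dim p₁ ≤ d and dim p₂ ≤ d. If p₁(v) = p₂(v) for every string v with |v| ≤ 2d−1, then p₁ = p₂. -/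
namespace Stmt4Aux

variable {A : Type*}

def shiftL (a : A) : (List A → ℝ) →ₗ[ℝ] (List A → ℝ) where
  toFun f := fun v => f (a :: v)
  map_add' _ _ := rfl
  map_smul' _ _ := rfl

def U (p : List A → ℝ) : Submodule ℝ (List A → ℝ) :=
  Submodule.span ℝ (Set.range (hankelCol p))

lemma shift_mem (p : List A → ℝ) (a : A) {f : List A → ℝ} (hf : f ∈ U p) :
    shiftL a f ∈ U p := by
  have : Submodule.map (shiftL a) (U p) ≤ U p := by
    rw [U, Submodule.map_span, Submodule.span_le]
    rintro g ⟨g', ⟨w, rfl⟩, rfl⟩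
    apply Submodule.subset_span
    exact ⟨w ++ [a], by funext v; simp [hankelCol, shiftL, List.append_assoc]⟩
  exact this ⟨f, hf, rfl⟩

def Zv (k : ℕ) : Submodule ℝ (List A → ℝ) where
  carrier := {f | ∀ v : List A, v.length < k → f v = 0}
  add_mem' := by intro f g hf hg v hv; simp [hf v hv, hg v hv]
  zero_mem' := by intro v hv; rfl
  smul_mem' := by intro c f hf v hv; simp [hf v hv]

def N (p : List A → ℝ) (k : ℕ) : Submodule ℝ (List A → ℝ) := U p ⊓ Zv k

lemma N_antitone (p : List A → ℝ) : Antitone (N p) := by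
  intro k m hkm
  exact inf_le_inf_left _ (fun f hf v hv => hf v (lt_of_lt_of_le hv hkm))

lemma N_step (p : List A → ℝ) (k : ℕ) (hk : N p k = N p (k + 1)) :
    N p (k + 1) = N p (k + 2) := by
  refine le_antisymm ?_ (N_antitone p (by omega))
  rintro f ⟨hfU, hfZ⟩
  refine ⟨hfU, fun v hv => ?_⟩
  match v with
  | [] => exact hfZ [] (by simp)
  | a :: v' =>
    have h1 : shiftL a f ∈ N p k :=
      ⟨shift_mem p a hfU, fun u hu => hfZ (a :: u) (by simp; omega)⟩
    rw [hk] at h1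
    exact h1.2 v' (by simpa using hv)

lemma N_stab (p : List A → ℝ) (k : ℕ) (hk : N p k = N p (k + 1)) :
    ∀ j : ℕ, N p (k + j) = N p (k + j + 1) ∧ N p (k + j) = N p k := by
  intro j
  induction j with
  | zero => exact ⟨hk, rfl⟩
  | succ i ih =>
    refine ⟨?_, ?_⟩
    · exact N_step p (k + i) ih.1
    · calc N p (k + (i + 1)) = N p (k + i) := ih.1.symm
        _ = N p k := ih.2

/-- main lemma: a string function of finite Hankel rank ≤ n vanishing on all
strings of length < n vanishes everywhere -/
lemma main (p : List A → ℝ) (n : ℕ) (hrank : Module.rank ℝ (U p) ≤ (n : Cardinal))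
    (hvan : ∀ v : List A, v.length < n → p v = 0) : ∀ v : List A, p v = 0 := by
  haveI : Module.Free ℝ (U p) := Module.Free.of_divisionRing ℝ _
  haveI : Module.Finite ℝ (U p) := by
    rw [← Module.rank_lt_aleph0_iff]
    exact lt_of_le_of_lt hrank (Cardinal.nat_lt_aleph0 n)
  have hfr : Module.finrank ℝ (U p) ≤ n := Module.finrank_le_of_rank_le hrank
  -- find a stabilization point k ≤ finrank
  have hex : ∃ k ≤ Module.finrank ℝ (U p), N p k = N p (k + 1) := by
    by_contra hc
    push_neg at hc
    have hlt : ∀ k ≤ Module.finrank ℝ (U p), N p (k + 1) < N p k := fun k hk =>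
      lt_of_le_of_ne (N_antitone p (by omega)) (fun e => hc k hk e.symm)
    haveI : ∀ k : ℕ, Module.Finite ℝ (N p k) := fun k =>
      Submodule.finiteDimensional_of_le (inf_le_left : N p k ≤ U p)
    have key : ∀ j, j ≤ Module.finrank ℝ (U p) + 1 →
        Module.finrank ℝ (N p j) + j ≤ Module.finrank ℝ (U p) := by
      intro j hj
      induction j with
      | zero =>
        have : N p 0 ≤ U p := inf_le_left
        simpa using Submodule.finrank_mono this
      | succ i ih =>
        have h1 : Module.finrank ℝ (N p (i + 1)) < Module.finrank ℝ (N p i) :=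
          Submodule.finrank_lt_finrank_of_lt (hlt i (by omega))
        have := ih (by omega)
        omega
    have := key (Module.finrank ℝ (U p) + 1) le_rfl
    omega
  obtain ⟨k, hk, hstab⟩ := hex
  intro v
  -- p^□ ∈ N p n, and N p m = N p k for all m ≥ k
  have hmem : hankelCol p [] ∈ N p n := by
    refine ⟨Submodule.subset_span ⟨[], rfl⟩, fun u hu => ?_⟩
    simpa [hankelCol] using hvan u hu
  have hkn : k ≤ n := le_trans hk hfr
  have h1 : N p n = N p k := by
    obtain ⟨j, rfl⟩ := Nat.exists_eq_add_of_le hkn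
    exact (N_stab p k hstab j).2
  set m := max n (v.length + 1) with hm
  have hkm : k ≤ m := le_trans hkn (le_max_left n (v.length + 1))
  have h2 : N p m = N p k := by
    obtain ⟨j, hj⟩ := Nat.exists_eq_add_of_le hkm
    rw [hj]; exact (N_stab p k hstab j).2
  have hmem' : hankelCol p [] ∈ N p m := by rw [h2, ← h1]; exact hmem
  have := hmem'.2 v (lt_of_lt_of_le (Nat.lt_succ_self _) (le_max_right n (v.length + 1)))
  simpa [hankelCol] using this

end Stmt4Aux

/-- Two string functions of dimension `≤ d` (`d ≥ 1`) that agree on all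
strings of length `≤ 2d−1` are equal. -/
theorem stmt4 {A : Type*} [Fintype A] [Nonempty A] (d : ℕ) (hd : 1 ≤ d)
    (p₁ p₂ : List A → ℝ)
    (h₁ : sfDim p₁ ≤ (d : Cardinal)) (h₂ : sfDim p₂ ≤ (d : Cardinal))
    (h : ∀ v : List A, v.length ≤ 2 * d - 1 → p₁ v = p₂ v) :
    p₁ = p₂ := by
  open Stmt4Aux in
  set p : List A → ℝ := fun v => p₁ v - p₂ v with hp
  have hUle : U p ≤ U p₁ ⊔ U p₂ := by
    rw [U, Submodule.span_le]
    rintro g ⟨w, rfl⟩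
    have : hankelCol p w = hankelCol p₁ w - hankelCol p₂ w := by
      funext v; simp [hankelCol, hp]
    rw [this]
    exact Submodule.sub_mem _
      (Submodule.mem_sup_left (Submodule.subset_span ⟨w, rfl⟩))
      (Submodule.mem_sup_right (Submodule.subset_span ⟨w, rfl⟩))
  have hrank : Module.rank ℝ (U p) ≤ ((2 * d : ℕ) : Cardinal) := by
    calc Module.rank ℝ (U p) ≤ Module.rank ℝ (U p₁ ⊔ U p₂ : Submodule ℝ _) :=
          Submodule.rank_mono hUle
      _ ≤ Module.rank ℝ (U p₁) + Module.rank ℝ (U p₂) :=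
          Submodule.rank_add_le_rank_add_rank _ _
      _ ≤ (d : Cardinal) + (d : Cardinal) := add_le_add h₁ h₂
      _ = ((2 * d : ℕ) : Cardinal) := by push_cast; ring
  have hvan : ∀ v : List A, v.length < 2 * d → p v = 0 := by
    intro v hv
    have := h v (by omega)
    simp [hp, this]
  have hall := Stmt4Aux.main p (2 * d) hrank hvan
  funext v
  have := hall v
  simpa [hp, sub_eq_zero] using this
end

section
/- Let d ≥ 1 and let p₁, p₂ : Σ* → ℝ be GUSSFs with dim p₁ ≤ d and dim p₂ ≤ d. If p₁(v) = p₂(v) for every string v with |v| = 2d−1, then p₁ = p₂. In other words, a GUSSF of dimension at most d is uniquely determined by its values on strings of length exactly 2d−1. -/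
/-- Functions vanishing on all strings of length `< k`. -/
def vanishSub (A : Type*) (k : ℕ) : Submodule ℝ (List A → ℝ) where
  carrier := {f | ∀ v : List A, v.length < k → f v = 0}
  add_mem' := fun hf hg v hv => by
    simp only [Pi.add_apply, hf v hv, hg v hv, add_zero]
  zero_mem' := fun v hv => rfl
  smul_mem' := fun c f hf v hv => by
    simp only [Pi.smul_apply, hf v hv, smul_zero]

/-- The left-shift operator `f ↦ (v ↦ f (a :: v))` as a linear map. -/
def shiftL {A : Type*} (a : A) : (List A → ℝ) →ₗ[ℝ] (List A → ℝ) where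
  toFun f := fun v => f (a :: v)
  map_add' := fun _ _ => rfl
  map_smul' := fun _ _ => rfl

lemma shiftL_hankelCol {A : Type*} (p : List A → ℝ) (w : List A) (a : A) :
    shiftL a (hankelCol p w) = hankelCol p (w ++ [a]) := by
  funext v
  simp [shiftL, hankelCol]

lemma shiftL_mem_span {A : Type*} {p : List A → ℝ} (a : A) {f : List A → ℝ}
    (hf : f ∈ Submodule.span ℝ (Set.range (hankelCol p))) :
    shiftL a f ∈ Submodule.span ℝ (Set.range (hankelCol p)) := by
  have hmap : (Submodule.span ℝ (Set.range (hankelCol p))).map (shiftL a)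
      ≤ Submodule.span ℝ (Set.range (hankelCol p)) := by
    rw [Submodule.map_span]
    apply Submodule.span_le.2
    rintro _ ⟨_, ⟨w, rfl⟩, rfl⟩
    rw [shiftL_hankelCol]
    exact Submodule.subset_span ⟨w ++ [a], rfl⟩
  exact hmap ⟨f, hf, rfl⟩

/-- Two GUSSFs of dimension `≤ d` (`d ≥ 1`) that agree on all strings of
length exactly `2d−1` are equal. -/
theorem stmt5 {A : Type*} [Fintype A] [Nonempty A] (d : ℕ) (hd : 1 ≤ d)
    (p₁ p₂ : List A → ℝ)
    (hg₁ : ∀ v : List A, ∑ a : A, p₁ (v ++ [a]) = p₁ v)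
    (hg₂ : ∀ v : List A, ∑ a : A, p₂ (v ++ [a]) = p₂ v)
    (h₁ : sfDim p₁ ≤ (d : Cardinal)) (h₂ : sfDim p₂ ≤ (d : Cardinal))
    (h : ∀ v : List A, v.length = 2 * d - 1 → p₁ v = p₂ v) :
    p₁ = p₂ := by
  classical
  set q : List A → ℝ := fun v => p₁ v - p₂ v with hq
  suffices hq0 : ∀ v : List A, q v = 0 by
    funext v
    have := hq0 v
    simp only [hq] at this
    linarith
  -- `q` vanishes on all strings of length ≤ 2d - 1
  have hdown : ∀ m : ℕ, ∀ v : List A, v.length + m = 2 * d - 1 → q v = 0 := by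
    intro m
    induction m with
    | zero =>
      intro v hv
      simp only [Nat.add_zero] at hv
      simp [hq, h v hv]
    | succ m ih =>
      intro v hv
      have : q v = ∑ a : A, q (v ++ [a]) := by
        simp only [hq, Finset.sum_sub_distrib, hg₁ v, hg₂ v]
      rw [this]
      apply Finset.sum_eq_zero
      intro a _
      apply ih
      simp only [List.length_append, List.length_cons, List.length_nil]
      omega
  have hqvan : ∀ v : List A, v.length < 2 * d → q v = 0 := by
    intro v hv
    exact hdown (2 * d - 1 - v.length) v (by omega)
  -- the span of the columns of q
  set W : Submodule ℝ (List A → ℝ) := Submodule.span ℝ (Set.range (hankelCol q)) with hW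
  set S₁ : Submodule ℝ (List A → ℝ) := Submodule.span ℝ (Set.range (hankelCol p₁)) with hS₁
  set S₂ : Submodule ℝ (List A → ℝ) := Submodule.span ℝ (Set.range (hankelCol p₂)) with hS₂
  have hWle : W ≤ S₁ ⊔ S₂ := by
    apply Submodule.span_le.2
    rintro _ ⟨w, rfl⟩
    have : hankelCol q w = hankelCol p₁ w - hankelCol p₂ w := by
      funext v; simp [hankelCol, hq]
    rw [this]
    exact sub_mem
      (Submodule.mem_sup_left (Submodule.subset_span ⟨w, rfl⟩))
      (Submodule.mem_sup_right (Submodule.subset_span ⟨w, rfl⟩))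
  have hrankW : Module.rank ℝ W ≤ ((2 * d : ℕ) : Cardinal) := by
    calc Module.rank ℝ W ≤ Module.rank ℝ ↥(S₁ ⊔ S₂) := Submodule.rank_mono hWle
      _ ≤ Module.rank ℝ S₁ + Module.rank ℝ S₂ := Submodule.rank_add_le_rank_add_rank S₁ S₂
      _ ≤ (d : Cardinal) + (d : Cardinal) := add_le_add h₁ h₂
      _ = ((2 * d : ℕ) : Cardinal) := by
          rw [two_mul, Nat.cast_add]
  have hWfd : FiniteDimensional ℝ W :=
    IsNoetherian.iff_fg.1 <| IsNoetherian.iff_rank_lt_aleph0.2 <|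
      hrankW.trans_lt (Cardinal.nat_lt_aleph0 _)
  have hfinW : Module.finrank ℝ W ≤ 2 * d := Module.finrank_le_of_rank_le hrankW
  -- the descending chain
  set Z : ℕ → Submodule ℝ (List A → ℝ) := fun k => W ⊓ vanishSub A k with hZ
  have hZle : ∀ k, Z k ≤ W := fun k => inf_le_left
  have hZfd : ∀ k, FiniteDimensional ℝ (Z k) :=
    fun k => Submodule.finiteDimensional_of_le (hZle k)
  have hZ0 : Z 0 = W := by
    apply le_antisymm (hZle 0)
    intro f hf
    exact ⟨hf, fun v hv => absurd hv (Nat.not_lt_zero _)⟩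
  have hZanti : ∀ j k, j ≤ k → Z k ≤ Z j := by
    intro j k hjk
    exact inf_le_inf le_rfl (fun f hf v hv => hf v (lt_of_lt_of_le hv hjk))
  -- one-step stabilisation
  have hstep : ∀ k, Z k = Z (k + 1) → Z (k + 1) = Z (k + 2) := by
    intro k hk
    apply le_antisymm _ (hZanti (k+1) (k+2) (by omega))
    rintro f ⟨hfW, hfv⟩
    refine ⟨hfW, fun v hv => ?_⟩
    match v with
    | [] => exact hfv [] (by simp)
    | a :: v' =>
      have hsh : shiftL a f ∈ Z k := by
        refine ⟨shiftL_mem_span a hfW, fun u hu => ?_⟩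
        exact hfv (a :: u) (by simp only [List.length_cons]; omega)
      rw [hk] at hsh
      have : (shiftL a f) v' = 0 := by
        apply hsh.2 v'
        simp only [List.length_cons] at hv
        omega
      exact this
  -- full stabilisation
  have hstab : ∀ k, Z k = Z (k + 1) →
      ∀ m, Z (k + m) = Z (k + m + 1) ∧ Z (k + m) = Z k := by
    intro k hk m
    induction m with
    | zero => exact ⟨hk, rfl⟩
    | succ n ih => exact ⟨hstep (k + n) ih.1, ih.1.symm.trans ih.2⟩
  -- q is in Z (2d)
  have hqW : q ∈ W := by
    have : q = hankelCol q [] := by funext v; simp [hankelCol]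
    rw [this]
    exact Submodule.subset_span ⟨[], rfl⟩
  have hqmem : q ∈ Z (2 * d) := ⟨hqW, hqvan⟩
  -- conclude: q ∈ Z j for all j
  have hall : ∀ j, q ∈ Z j := by
    by_cases hex : ∃ k, k < 2 * d ∧ Z k = Z (k + 1)
    · obtain ⟨k, hklt, hkeq⟩ := hex
      intro j
      rcases Nat.le_total j (2 * d) with hj | hj
      · exact hZanti j (2 * d) hj hqmem
      · have hkj : k ≤ j := by omega
        have := (hstab k hkeq (j - k)).2
        rw [Nat.add_sub_cancel' hkj] at this
        rw [this]
        exact hZanti k (2 * d) (by omega) hqmem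
    · -- all inclusions strict up to 2d: finrank drops each step
      push_neg at hex
      have hstrict : ∀ k, k < 2 * d → Z (k + 1) < Z k := by
        intro k hk
        exact lt_of_le_of_ne (hZanti k (k + 1) (by omega))
          (fun e => hex k hk e.symm)
      have hdrop : ∀ k, k ≤ 2 * d → Module.finrank ℝ (Z k) + k ≤ Module.finrank ℝ (Z 0) := by
        intro k
        induction k with
        | zero => intro _; omega
        | succ n ih =>
          intro hn
          haveI := hZfd n
          have hlt := Submodule.finrank_lt_finrank_of_lt (hstrict n (by omega))
          have := ih (by omega)
          omega
      have hfinZ0 : Module.finrank ℝ (Z 0) ≤ 2 * d := by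
        rw [hZ0]; exact hfinW
      have h2d := hdrop (2 * d) le_rfl
      have hz : Module.finrank ℝ (Z (2 * d)) = 0 := by omega
      haveI := hZfd (2 * d)
      have hbot : Z (2 * d) = ⊥ := Submodule.finrank_eq_zero.1 hz
      have : q = 0 := by
        have := hqmem
        rw [hbot] at this
        simpa using this
      intro j
      rw [this]
      exact (Z j).zero_mem
  intro v
  exact (hall (v.length + 1)).2 v (Nat.lt_succ_self _)
end

section
/- Let p : Σ* → ℝ be a string function with dim p = d < ∞. Suppose v_1,…,v_d, w_1,…,w_d ∈ Σ* are such that the rows p_{v_i} : w ↦ p(wv_i) span the row space of the Hankel matrix 𝒫_p and the columns p^{w_j} : v ↦ p(w_j v) span the column space of 𝒫_p, and that V := [p(w_j v_i)]_{1≤i,j≤d} ∈ ℝ^{d×d} is invertible. Define x := (p(v_1),…,p(v_d))ᵀ, let y ∈ ℝ^d be such that Σ_{i=1}^d y_i p(w_j v_i) = p(w_j) for all 1 ≤ j ≤ d, and set W_a := [p(w_j a v_i)]_{1≤i,j≤d} and T_a := W_a V^{−1} for each a ∈ Σ. Then p(v = a_1…a_n) = yᵀ T_{a_n}···T_{a_1}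 x for all v ∈ Σ*. -/
open Matrix

/-- The row `p_v` of the Hankel matrix of `p`, as a function `w ↦ p(wv)`. -/
def hankelRow {A : Type*} (p : List A → ℝ) (v : List A) : List A → ℝ :=
  fun w => p (w ++ v)

/-- Correctness of the learning algorithm: if rows `p_{vᵢ}` span the row
space, columns `p^{wⱼ}` span the column space, `V = [p(wⱼvᵢ)]` is invertible,
`x = (p(v₁),…,p(v_d))ᵀ`, `y` satisfies `∑ᵢ yᵢ p(wⱼvᵢ) = p(wⱼ)`, `W_a = [p(wⱼavᵢ)]`, and
`T_a = W_a V⁻¹`, then `p(a₁…aₙ) = yᵀ T_{aₙ} ⋯ T_{a₁} x` for all strings. -/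
theorem stmt6 {A : Type*} [Fintype A] [Nonempty A] (p : List A → ℝ) (d : ℕ)
    (hdim : sfDim p = (d : Cardinal))
    (vs ws : Fin d → List A)
    (hrow : Submodule.span ℝ (Set.range fun i : Fin d => hankelRow p (vs i)) =
            Submodule.span ℝ (Set.range (hankelRow p)))
    (hcol : Submodule.span ℝ (Set.range fun j : Fin d => hankelCol p (ws j)) =
            Submodule.span ℝ (Set.range (hankelCol p)))
    (V : Matrix (Fin d) (Fin d) ℝ) (hV : V = Matrix.of fun i j => p (ws j ++ vs i))
    (hVunit : IsUnit V.det)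
    (x : Fin d → ℝ) (hx : x = fun i => p (vs i))
    (y : Fin d → ℝ) (hy : ∀ j : Fin d, ∑ i : Fin d, y i * p (ws j ++ vs i) = p (ws j))
    (W : A → Matrix (Fin d) (Fin d) ℝ)
    (hW : ∀ a : A, W a = Matrix.of fun i j => p (ws j ++ [a] ++ vs i))
    (T : A → Matrix (Fin d) (Fin d) ℝ) (hT : ∀ a : A, T a = W a * V⁻¹) :
    ∀ v : List A, p v = y ⬝ᵥ (wordProd T v) *ᵥ x := by
  have hVTunit : IsUnit (Vᵀ).det := by rwa [Matrix.det_transpose]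
  set r : List A → Fin d → ℝ := fun v j => p (ws j ++ v) with hr
  set q : List A → Fin d → ℝ := fun v => (Vᵀ)⁻¹ *ᵥ r v with hq
  -- uniqueness helper
  have huniq : ∀ (v : List A) (c : Fin d → ℝ), Vᵀ *ᵥ c = r v → c = q v := by
    intro v c hc
    show c = Vᵀ⁻¹ *ᵥ r v
    rw [← hc, Matrix.mulVec_mulVec, Matrix.nonsing_inv_mul _ hVTunit,
      Matrix.one_mulVec]
  have key : ∀ (v w : List A), p (w ++ v) = ∑ i, q v i * p (w ++ vs i) := by
    intro v
    have hmem : hankelRow p v ∈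
        Submodule.span ℝ (Set.range fun i : Fin d => hankelRow p (vs i)) := by
      rw [hrow]; exact Submodule.subset_span ⟨v, rfl⟩
    obtain ⟨c, hc⟩ := (Submodule.mem_span_range_iff_exists_fun ℝ).mp hmem
    have hc' : ∀ w, ∑ i, c i * p (w ++ vs i) = p (w ++ v) := by
      intro w
      have := congrFun hc w
      simpa [hankelRow, Finset.sum_apply] using this
    have hcq : c = q v := by
      apply huniq
      funext j
      simp only [Matrix.mulVec, dotProduct, hV, Matrix.transpose_apply,
        Matrix.of_apply, hr]
      simpa [mul_comm] using hc' (ws j)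
    intro w
    rw [← hcq, hc' w]
  -- base : y = q []
  have hbase : y = q [] := by
    apply huniq
    funext j
    simp only [Matrix.mulVec, dotProduct, hV, Matrix.transpose_apply,
      Matrix.of_apply, hr]
    simpa [mul_comm] using hy j
  have step : ∀ v : List A, (wordProd T v)ᵀ *ᵥ y = q v := by
    intro v
    induction v with
    | nil =>
      simp only [wordProd, List.reverse_nil, List.map_nil, List.prod_nil,
        Matrix.transpose_one, Matrix.one_mulVec]
      exact hbase
    | cons a v ih =>
      have hwp : wordProd T (a :: v) = wordProd T v * T a := by
        simp [wordProd]
      rw [hwp]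
      apply huniq
      rw [Matrix.transpose_mul, ← Matrix.mulVec_mulVec, ih, Matrix.mulVec_mulVec,
        ← Matrix.transpose_mul, hT a, Matrix.mul_assoc,
        Matrix.nonsing_inv_mul _ hVunit, Matrix.mul_one]
      funext j
      simp only [Matrix.mulVec, dotProduct, hW, Matrix.transpose_apply,
        Matrix.of_apply, hr]
      have := key v (ws j ++ [a])
      simp only [List.append_assoc, List.singleton_append] at this ⊢
      simpa [mul_comm] using this.symm
  intro v
  have := key v []
  simp only [List.nil_append] at this
  rw [this, Matrix.dotProduct_mulVec, hx]
  have hvm : y ᵥ* wordProd T v = (wordProd T v)ᵀ *ᵥ y := by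
    rw [Matrix.mulVec_transpose]
  rw [hvm, step v, dotProduct]
end

section
/- Let d ≥ 1, n ≥ 2d−1, and let (p(v))_{v∈Σ^n} be a family of nonnegative reals; extend p to all strings u with |u| < n by p(u) := Σ_{v∈Σ^{n−|u|}} p(uv). Then there exist matrices T_a ∈ ℂ^{d×d} (a ∈ Σ) and vectors x, y ∈ ℂ^d with yᵀ(Σ_{a∈Σ} T_a) = yᵀ such that p(v = a_1…a_n) = yᵀ T_{a_n}···T_{a_1} x for all v ∈ Σ^n, if and only if the following two conditions hold: (a) rank 𝒫_{p,d−1,d−1} ≤ d, equivalently det [p(w_j v_i)]_{1≤i,j≤d+1} = 0 for all choices of strings v_1,…,v_{d+1}, w_1,…,w_{d+1} of length at most d−1; (b) rank 𝒫_{p,⌈n/2⌉,⌊n/2⌋} = rank 𝒫_{p,⌊n/2⌋,⌈n/2⌉} = rank 𝒫_{p,d−1,d−1}. -/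
set_option linter.unusedSectionVars false
set_option linter.unusedVariables false
set_option maxHeartbeats 1000000

open Matrix

open Matrix

/-- The rank of the finite Hankel submatrix `𝒫_{p,n,m} = [p(wv)]_{|v|≤n, |w|≤m}`,
i.e. the dimension of the span of its columns (functions on row-strings of length `≤ n`). -/
noncomputable def hankelRank {A : Type*} (p : List A → ℝ) (n m : ℕ) : Cardinal :=
  Module.rank ℝ ↥(Submodule.span ℝ (Set.range
    fun w : {w : List A // w.length ≤ m} =>
      fun v : {v : List A // v.length ≤ n} => p (w.1 ++ v.1)))

namespace Stmt7Aux

open Submodule Module Set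

variable {A : Type*} [Fintype A]

instance strFinite (s : ℕ) : Finite {v : List A // v.length ≤ s} := by
  have hinj : Function.Injective
      (fun v : {v : List A // v.length ≤ s} => (fun i : Fin (s+1) => v.1[(i:ℕ)]?)) := by
    intro v w h
    ext1
    apply List.ext_getElem?
    intro k
    by_cases hk : k < s + 1
    · exact congrFun h ⟨k, hk⟩
    · rw [List.getElem?_eq_none (le_trans v.2 (by omega)),
        List.getElem?_eq_none (le_trans w.2 (by omega))]
  exact Finite.of_injective _ hinj

noncomputable def HS (p : List A → ℝ) (s t : ℕ) :
    Submodule ℝ ({v : List A // v.length ≤ s} → ℝ) :=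
  Submodule.span ℝ (Set.range fun w : {w : List A // w.length ≤ t} =>
    fun v : {v : List A // v.length ≤ s} => p (w.1 ++ v.1))

lemma hankelRank_def (p : List A → ℝ) (s t : ℕ) :
    hankelRank p s t = Module.rank ℝ (HS p s t) := rfl

instance (p : List A → ℝ) (s t : ℕ) : FiniteDimensional ℝ (HS p s t) :=
  FiniteDimensional.span_of_finite ℝ (Set.finite_range _)

lemma hankelRank_eq_finrank (p : List A → ℝ) (s t : ℕ) :
    hankelRank p s t = (finrank ℝ (HS p s t) : Cardinal) :=
  (Module.finrank_eq_rank ℝ _).symm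

lemma HS_mono_right (p : List A → ℝ) (s : ℕ) {t t' : ℕ} (htt : t ≤ t') :
    HS p s t ≤ HS p s t' := by
  rw [HS, Submodule.span_le]
  rintro x ⟨w, rfl⟩
  exact subset_span ⟨⟨w.1, w.2.trans htt⟩, rfl⟩

lemma finrank_HS_mono (p : List A → ℝ) {s s' t t' : ℕ} (hss : s ≤ s') (htt : t ≤ t') :
    finrank ℝ (HS p s t) ≤ finrank ℝ (HS p s' t') := by
  classical
  set res : ({v : List A // v.length ≤ s'} → ℝ) →ₗ[ℝ] ({v : List A // v.length ≤ s} → ℝ) :=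
    LinearMap.funLeft ℝ ℝ (fun v => ⟨v.1, v.2.trans hss⟩) with hres
  have h1 : HS p s t ≤ (HS p s' t').map res := by
    rw [HS, HS, Submodule.map_span, Submodule.span_le]
    rintro x ⟨w, rfl⟩
    refine subset_span ⟨fun v => p (w.1 ++ v.1), ⟨⟨w.1, w.2.trans htt⟩, rfl⟩, rfl⟩
  refine (Submodule.finrank_mono h1).trans ?_
  exact Submodule.finrank_map_le res (HS p s' t')
open Submodule Module Set

variable {A : Type*} [Fintype A] {n : ℕ} {p : List A → ℝ}

lemma pext (hext : ∀ u : List A, u.length < n →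
      p u = ∑ f : Fin (n - u.length) → A, p (u ++ List.ofFn f)) :
    ∀ u : List A, u.length ≤ n → p u = ∑ f : Fin (n - u.length) → A, p (u ++ List.ofFn f) := by
  intro u hu
  rcases lt_or_eq_of_le hu with h | h
  · exact hext u h
  · have h0 : n - u.length = 0 := by omega
    rw [h0]
    rw [Fintype.sum_unique]
    simp

lemma psum (hext : ∀ u : List A, u.length < n →
      p u = ∑ f : Fin (n - u.length) → A, p (u ++ List.ofFn f)) :
    ∀ u : List A, u.length < n → p u = ∑ a : A, p (u ++ [a]) := by
  intro u hu
  obtain ⟨k, hk⟩ : ∃ k, n - u.length = k + 1 := ⟨n - u.length - 1, by omega⟩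
  have step : ∀ a : A, p (u ++ [a]) = ∑ f : Fin k → A, p ((u ++ [a]) ++ List.ofFn f) := by
    intro a
    have h1 := pext hext (u ++ [a]) (by simp only [List.length_append, List.length_singleton]; omega)
    have h2 : n - (u ++ [a]).length = k := by
      simp only [List.length_append, List.length_singleton]; omega
    rw [h2] at h1
    exact h1
  calc p u = ∑ f : Fin (k+1) → A, p (u ++ List.ofFn f) := by rw [hext u hu, hk]
    _ = ∑ x : A × (Fin k → A), p (u ++ List.ofFn (Fin.cons x.1 x.2)) := by
        rw [← Equiv.sum_comp (Fin.consEquiv fun _ => A) (fun f => p (u ++ List.ofFn f))]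
        rfl
    _ = ∑ a : A, ∑ f : Fin k → A, p (u ++ List.ofFn (Fin.cons a f)) := by
        rw [Fintype.sum_prod_type]
    _ = ∑ a : A, p (u ++ [a]) := by
        refine Finset.sum_congr rfl fun a _ => ?_
        rw [step a]
        refine Finset.sum_congr rfl fun f _ => ?_
        congr 1
        simp [List.ofFn_succ, Fin.cons_zero, Fin.cons_succ]


lemma rank_real_eq_complex {X κ : Type*} [Finite κ] (c : κ → (X → ℝ)) :
    finrank ℝ (span ℝ (Set.range c)) =
      finrank ℂ (span ℂ (Set.range (fun k => fun x => (c k x : ℂ)))) := by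
  classical
  cases nonempty_fintype κ
  set c' : κ → (X → ℂ) := fun k => fun x => (c k x : ℂ) with hc'
  have inst1 : FiniteDimensional ℝ (span ℝ (Set.range c)) :=
    FiniteDimensional.span_of_finite ℝ (Set.finite_range _)
  have inst2 : FiniteDimensional ℂ (span ℂ (Set.range c')) :=
    FiniteDimensional.span_of_finite ℂ (Set.finite_range _)
  set Sr := span ℝ (Set.range c) with hSr
  set Sc := span ℂ (Set.range c') with hSc
  set r := finrank ℝ Sr with hr
  set b : Basis (Fin r) ℝ Sr := Module.finBasis ℝ Sr with hb
  set ι : (X → ℝ) →ₗ[ℝ] (X → ℂ) :=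
    { toFun := fun f x => (f x : ℂ)
      map_add' := by intro f g; funext x; simp
      map_smul' := by intro a f; funext x; simp }
  have iapp : ∀ (f : X → ℝ) (x : X), ι f x = (f x : ℂ) := fun f x => rfl
  have hbli : LinearIndependent ℝ (fun j : Fin r => ((b j : X → ℝ))) :=
    b.linearIndependent.map' Sr.subtype (Submodule.ker_subtype _)
  refine le_antisymm ?_ ?_
  · -- r ≤ finrank ℂ Sc
    have hmem : ∀ j : Fin r, ι ((b j : X → ℝ)) ∈ Sc := by
      intro j
      have h2 : (Sr.map ι : Submodule ℝ (X → ℂ)) ≤ Submodule.restrictScalars ℝ Sc := by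
        rw [hSr, Submodule.map_span]
        refine le_trans (Submodule.span_mono ?_) (Submodule.span_le_restrictScalars ℝ ℂ _)
        rintro x ⟨y, ⟨k, rfl⟩, rfl⟩
        exact ⟨k, rfl⟩
      exact h2 ⟨_, (b j).2, rfl⟩
    have key : ∀ (h : Fin r → ℂ), (∑ j, h j • ι ((b j : X → ℝ))) = 0 → ∀ j, (h j).re = 0 := by
      intro h hh
      have hre : ∑ j, (h j).re • ((b j : X → ℝ)) = 0 := by
        funext x
        have h1 := congrFun hh x
        rw [Finset.sum_apply] at h1
        have h2 := congrArg Complex.re h1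
        rw [Complex.re_sum] at h2
        rw [Finset.sum_apply]
        simpa [iapp, Complex.mul_re] using h2
      exact Fintype.linearIndependent_iff.mp hbli _ hre
    have hli : LinearIndependent ℂ (fun j : Fin r => (⟨ι ((b j : X → ℝ)), hmem j⟩ : Sc)) := by
      refine LinearIndependent.of_comp Sc.subtype ?_
      rw [Fintype.linearIndependent_iff]
      intro g hg
      have hg' : ∑ j, g j • ι ((b j : X → ℝ)) = 0 := by
        simpa using hg
      have hgI : ∑ j, (Complex.I * g j) • ι ((b j : X → ℝ)) = 0 := by
        calc ∑ j, (Complex.I * g j) • ι ((b j : X → ℝ))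
            = Complex.I • ∑ j, g j • ι ((b j : X → ℝ)) := by
              rw [Finset.smul_sum]; exact Finset.sum_congr rfl fun j _ => (mul_smul _ _ _)
          _ = 0 := by rw [hg', smul_zero]
      intro j
      have h1 := key g hg' j
      have h2 := key _ hgI j
      simp [Complex.mul_re] at h2
      exact Complex.ext h1 h2
    simpa using hli.fintype_card_le_finrank
  · -- finrank ℂ Sc ≤ r
    have hspan : ∀ k, c' k ∈ span ℂ (Set.range fun j : Fin r => ι ((b j : X → ℝ))) := by
      intro k
      have hck : c k ∈ Sr := subset_span ⟨k, rfl⟩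
      have hsum : ∑ j, (b.repr ⟨c k, hck⟩) j • ((b j : X → ℝ)) = c k := by
        have := b.sum_repr ⟨c k, hck⟩
        calc ∑ j, (b.repr ⟨c k, hck⟩) j • ((b j : X → ℝ))
            = ((∑ j, (b.repr ⟨c k, hck⟩) j • b j : Sr) : X → ℝ) := by
              push_cast [Submodule.coe_sum]
              rfl
          _ = c k := by rw [this]
      have : c' k = ∑ j, ((b.repr ⟨c k, hck⟩ j : ℝ) : ℂ) • ι ((b j : X → ℝ)) := by
        have h3 : c' k = ι (c k) := rfl
        rw [h3]
        conv_lhs => rw [← hsum]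
        rw [map_sum]
        refine Finset.sum_congr rfl fun j _ => ?_
        rw [_root_.map_smul]
        funext x
        simp [Complex.real_smul]
      rw [this]
      exact Submodule.sum_mem _ fun j _ => Submodule.smul_mem _ _ (subset_span ⟨j, rfl⟩)
    have hle : Sc ≤ span ℂ (Set.range fun j : Fin r => ι ((b j : X → ℝ))) := by
      rw [hSc, Submodule.span_le]
      rintro x ⟨k, rfl⟩
      exact hspan k
    have inst3 : FiniteDimensional ℂ (span ℂ (Set.range fun j : Fin r => ι ((b j : X → ℝ)))) :=
      FiniteDimensional.span_of_finite ℂ (Set.finite_range _)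
    refine (Submodule.finrank_mono hle).trans ?_
    refine le_trans (finrank_span_le_card _) ?_
    rw [Set.toFinset_range]
    exact le_trans (Finset.card_image_le) (by simp)

open Submodule Module

section chain
variable {V : Type*} [AddCommGroup V] [Module ℂ V] [FiniteDimensional ℂ V] {d : ℕ}

lemma chain_stable {W : ℕ → Submodule ℂ V}
    (hprop : ∀ t, W t = W (t+1) → W (t+1) = W (t+2)) {t : ℕ} (h : W t = W (t+1)) :
    ∀ s, t ≤ s → W s = W t := by
  have aux : ∀ k, W (t+k) = W (t+k+1) := by
    intro k; induction k with
    | zero => exact h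
    | succ k ih => exact hprop (t+k) ih
  have key : ∀ k, W (t+k) = W t := by
    intro k; induction k with
    | zero => rfl
    | succ k ih => rw [← ih]; exact (aux k).symm
  intro s hs
  have : s = t + (s - t) := by omega
  rw [this]; exact key _

lemma chain_up (hd : 1 ≤ d) (hV : finrank ℂ V ≤ d) (W : ℕ → Submodule ℂ V)
    (hstep : ∀ t, W t ≤ W (t+1))
    (hprop : ∀ t, W t = W (t+1) → W (t+1) = W (t+2))
    (h0 : finrank ℂ (W 0) ≤ 1) (hbot : W 0 = ⊥ → W 1 = ⊥) :
    ∀ s, d - 1 ≤ s → W s = W (d-1) := by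
  by_cases hex : ∃ t, t ≤ d - 1 ∧ W t = W (t+1)
  · obtain ⟨t, ht, hstab⟩ := hex
    intro s hs
    rw [chain_stable hprop hstab s (ht.trans hs), chain_stable hprop hstab (d-1) ht]
  · push_neg at hex
    have hne : ∀ t, t ≤ d - 1 → W t ≠ W (t+1) := hex
    have hW0 : W 0 ≠ ⊥ := by
      intro hb
      exact hne 0 (Nat.zero_le _) (hb.trans (hbot hb).symm)
    have hfr0 : 1 ≤ finrank ℂ (W 0) := by
      rcases Nat.eq_zero_or_pos (finrank ℂ (W 0)) with h | h
      · exact absurd (Submodule.finrank_eq_zero.mp h) hW0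
      · exact h
    have claim : ∀ t, t ≤ d - 1 → t + 1 ≤ finrank ℂ (W t) := by
      intro t
      induction t with
      | zero => intro _; exact hfr0
      | succ t ih =>
        intro ht
        have h1 : W t < W (t+1) := lt_of_le_of_ne (hstep t) (hne t (by omega))
        have h2 := Submodule.finrank_lt_finrank_of_lt h1
        have := ih (by omega)
        omega
    have hbig : d ≤ finrank ℂ (W (d-1)) := by
      have := claim (d-1) le_rfl
      omega
    intro s hs
    have hmono : ∀ a b, a ≤ b → W a ≤ W b := by
      intro a b hab
      induction b with
      | zero => have : a = 0 := by omega
                rw [this]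
      | succ b ih =>
        rcases Nat.lt_or_ge a (b+1) with h | h
        · exact (ih (by omega)).trans (hstep b)
        · have : a = b + 1 := by omega
          rw [this]
    have hle : W (d-1) ≤ W s := hmono _ _ hs
    have hfr : finrank ℂ (W s) ≤ finrank ℂ (W (d-1)) :=
      le_trans (le_trans (Submodule.finrank_le _) hV) hbig
    exact (Submodule.eq_of_le_of_finrank_le hle hfr).symm

lemma chain_down (hd : 1 ≤ d) (hV : finrank ℂ V = d) (W : ℕ → Submodule ℂ V)
    (hstep : ∀ t, W (t+1) ≤ W t)
    (hprop : ∀ t, W t = W (t+1) → W (t+1) = W (t+2))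
    (h0 : d ≤ finrank ℂ (W 0) + 1) (htop : W 0 = ⊤ → W 1 = ⊤) :
    ∀ s, d - 1 ≤ s → W s = W (d-1) := by
  by_cases hex : ∃ t, t ≤ d - 1 ∧ W t = W (t+1)
  · obtain ⟨t, ht, hstab⟩ := hex
    intro s hs
    rw [chain_stable hprop hstab s (ht.trans hs), chain_stable hprop hstab (d-1) ht]
  · push_neg at hex
    have hne : ∀ t, t ≤ d - 1 → W t ≠ W (t+1) := hex
    have hW0 : W 0 ≠ ⊤ := by
      intro hb
      exact hne 0 (Nat.zero_le _) (hb.trans (htop hb).symm)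
    have hfr0 : finrank ℂ (W 0) = d - 1 := by
      have h1 : finrank ℂ (W 0) < d := by
        have h2 := Submodule.finrank_lt_finrank_of_lt (lt_of_le_of_ne le_top hW0)
        rw [finrank_top, hV] at h2
        exact h2
      omega
    have claim : ∀ t, t ≤ d - 1 → finrank ℂ (W t) + t ≤ d - 1 := by
      intro t
      induction t with
      | zero => intro _; omega
      | succ t ih =>
        intro ht
        have h1 : W (t+1) < W t := lt_of_le_of_ne (hstep t) (fun h => hne t (by omega) h.symm)
        have h2 := Submodule.finrank_lt_finrank_of_lt h1
        have := ih (by omega)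
        omega
    have hzero : finrank ℂ (W (d-1)) = 0 := by
      have := claim (d-1) le_rfl
      omega
    have hbotW : W (d-1) = ⊥ := Submodule.finrank_eq_zero.mp hzero
    intro s hs
    have hmono : ∀ a b, a ≤ b → W b ≤ W a := by
      intro a b hab
      induction b with
      | zero => have : a = 0 := by omega
                rw [this]
      | succ b ih =>
        rcases Nat.lt_or_ge a (b+1) with h | h
        · exact (hstep b).trans (ih (by omega))
        · have : a = b + 1 := by omega
          rw [this]
    have : W s ≤ W (d-1) := hmono _ _ hs
    rw [hbotW] at this ⊢
    exact le_bot_iff.mp this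
end chain
open Matrix Submodule Module


section wprod
variable {A M : Type*} [Monoid M] (T : A → M)

def wprod (w : List A) : M := (w.reverse.map T).prod

@[simp] lemma wprod_nil : wprod T [] = 1 := rfl

lemma wprod_append (u v : List A) : wprod T (u ++ v) = wprod T v * wprod T u := by
  unfold wprod
  rw [List.reverse_append, List.map_append, List.prod_append]

@[simp] lemma wprod_singleton (a : A) : wprod T [a] = T a := by
  unfold wprod; simp

lemma wprod_concat (u : List A) (a : A) : wprod T (u ++ [a]) = T a * wprod T u := by
  rw [wprod_append, wprod_singleton]

lemma wprod_cons (a : A) (u : List A) : wprod T (a :: u) = wprod T u * T a := by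
  have : a :: u = [a] ++ u := rfl
  rw [this, wprod_append, wprod_singleton]

end wprod

lemma wordProd_eq_wprod {A R : Type*} [Semiring R] {d : ℕ}
    (T : A → Matrix (Fin d) (Fin d) R) (v : List A) : wordProd T v = wprod T v := rfl
lemma forward {d : ℕ} (hd : 1 ≤ d) (hn : 2*d - 1 ≤ n)
    (hext : ∀ u : List A, u.length < n →
      p u = ∑ f : Fin (n - u.length) → A, p (u ++ List.ofFn f))
    (T : A → Matrix (Fin d) (Fin d) ℂ) (x y : Fin d → ℂ)
    (hy : y ᵥ* (∑ a : A, T a) = y)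
    (hp : ∀ v : List A, v.length = n → (p v : ℂ) = y ⬝ᵥ (wordProd T v) *ᵥ x) :
    hankelRank p (d-1) (d-1) ≤ (d : Cardinal) ∧
      hankelRank p ((n+1)/2) (n/2) = hankelRank p (d-1) (d-1) ∧
      hankelRank p (n/2) ((n+1)/2) = hankelRank p (d-1) (d-1) := by
  classical
  -- sum helpers
  have hsum1 : ∀ (Mf : A → Matrix (Fin d) (Fin d) ℂ) (z : Fin d → ℂ),
      (∑ a : A, Mf a) *ᵥ z = ∑ a : A, (Mf a *ᵥ z) := by
    intro Mf z; funext i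
    simp only [Matrix.mulVec, dotProduct, Matrix.sum_apply, Finset.sum_apply,
      Finset.sum_mul]
    rw [Finset.sum_comm]
  have hsum2 : ∀ (f : A → (Fin d → ℂ)), y ⬝ᵥ (∑ a : A, f a) = ∑ a : A, y ⬝ᵥ f a := by
    intro f
    simp only [dotProduct, Finset.sum_apply, Finset.mul_sum]
    rw [Finset.sum_comm]
  -- extension of the representation to all lengths ≤ n
  have hpall : ∀ u : List A, u.length ≤ n → (p u : ℂ) = y ⬝ᵥ (wprod T u) *ᵥ x := by
    have key : ∀ (k : ℕ) (u : List A), u.length ≤ n → n - u.length = k →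
        (p u : ℂ) = y ⬝ᵥ (wprod T u) *ᵥ x := by
      intro k
      induction k with
      | zero => intro u hu hk; exact hp u (by omega)
      | succ k ih =>
        intro u hu hk
        have hlt : u.length < n := by omega
        rw [psum hext u hlt]
        push_cast
        have hrw : ∀ a : A, (p (u ++ [a]) : ℂ) = y ⬝ᵥ (T a * wprod T u) *ᵥ x := by
          intro a
          rw [← wprod_concat]
          exact ih (u ++ [a]) (by simp only [List.length_append, List.length_singleton]; omega)
            (by simp only [List.length_append, List.length_singleton]; omega)
        calc ∑ a : A, (p (u ++ [a]) : ℂ)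
            = ∑ a : A, y ⬝ᵥ (T a * wprod T u) *ᵥ x := Finset.sum_congr rfl fun a _ => hrw a
          _ = y ⬝ᵥ ((∑ a : A, T a) * wprod T u) *ᵥ x := by
              rw [Finset.sum_mul, hsum1, hsum2]
          _ = y ⬝ᵥ (wprod T u) *ᵥ x := by
              rw [← Matrix.mulVec_mulVec, Matrix.dotProduct_mulVec, hy]
    intro u hu; exact key (n - u.length) u hu rfl
  -- the forward state spaces
  set Wc : ℕ → Submodule ℂ (Fin d → ℂ) :=
    fun t => span ℂ (Set.range fun w : {w : List A // w.length ≤ t} => wprod T w.1 *ᵥ x)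
    with hWcdef
  -- linear functionals
  set ell : List A → ((Fin d → ℂ) →ₗ[ℂ] ℂ) := fun v =>
    { toFun := fun u => y ⬝ᵥ (wprod T v *ᵥ u)
      map_add' := by intro u1 u2; simp [Matrix.mulVec_add, dotProduct_add]
      map_smul' := by intro c u; simp [Matrix.mulVec_smul, dotProduct_smul] }
    with helldef
  have ellapp : ∀ (v : List A) (u : Fin d → ℂ), ell v u = y ⬝ᵥ (wprod T v *ᵥ u) := fun _ _ => rfl
  set N : ℕ → Submodule ℂ (Fin d → ℂ) :=
    fun s => ⨅ v : {v : List A // v.length ≤ s}, LinearMap.ker (ell v.1) with hNdef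
  have memN : ∀ (s : ℕ) (u : Fin d → ℂ),
      u ∈ N s ↔ ∀ v : List A, v.length ≤ s → y ⬝ᵥ (wprod T v *ᵥ u) = 0 := by
    intro s u
    rw [hNdef, Submodule.mem_iInf]
    constructor
    · intro h v hv; exact h ⟨v, hv⟩
    · intro h v; exact h v.1 v.2
  -- the evaluation maps
  set L : ∀ s : ℕ, (Fin d → ℂ) →ₗ[ℂ] ({v : List A // v.length ≤ s} → ℂ) := fun s =>
    { toFun := fun u => fun v => y ⬝ᵥ (wprod T v.1 *ᵥ u)
      map_add' := by
        intro u1 u2; funext v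
        simp only [Matrix.mulVec_add, dotProduct_add, Pi.add_apply]
      map_smul' := by
        intro c u; funext v
        simp only [Matrix.mulVec_smul, dotProduct_smul, Pi.smul_apply, RingHom.id_apply,
          smul_eq_mul]
    } with hLdef
  have Lapp : ∀ (s : ℕ) (u : Fin d → ℂ) (v : {v : List A // v.length ≤ s}),
      L s u v = y ⬝ᵥ (wprod T v.1 *ᵥ u) := fun _ _ _ => rfl
  -- chain facts for Wc
  have hWstep : ∀ t, Wc t ≤ Wc (t+1) := by
    intro t
    rw [hWcdef, Submodule.span_le]
    rintro z ⟨w, rfl⟩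
    exact subset_span ⟨⟨w.1, by omega⟩, rfl⟩
  have hWform : ∀ t, Wc (t+1) = Wc t ⊔ ⨆ a : A, (Wc t).map (T a).mulVecLin := by
    intro t
    apply le_antisymm
    · rw [hWcdef, Submodule.span_le]
      rintro z ⟨w, rfl⟩
      rcases List.eq_nil_or_concat w.1 with hnil | ⟨u, b, hub⟩
      · apply Submodule.mem_sup_left
        refine subset_span ⟨⟨w.1, by rw [hnil]; simp⟩, rfl⟩
      · apply Submodule.mem_sup_right
        rw [List.concat_eq_append] at hub
        have hu : u.length ≤ t := by
          have := w.2; rw [hub] at this; simp at this; omega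
        have : wprod T w.1 *ᵥ x = (T b).mulVecLin (wprod T u *ᵥ x) := by
          rw [hub]
          show wprod T (u ++ [b]) *ᵥ x = _
          rw [wprod_concat, Matrix.mulVecLin_apply, Matrix.mulVec_mulVec]
        have hmem : (T b).mulVecLin (wprod T u *ᵥ x) ∈
            ⨆ a : A, Submodule.map (T a).mulVecLin (Wc t) :=
          Submodule.mem_iSup_of_mem b (Submodule.mem_map_of_mem (subset_span ⟨⟨u, hu⟩, rfl⟩))
        show wprod T w.1 *ᵥ x ∈ _
        rw [this]
        exact hmem
    · apply sup_le (hWstep t)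
      refine iSup_le fun a => ?_
      rw [Submodule.map_le_iff_le_comap, hWcdef, Submodule.span_le]
      rintro z ⟨w, rfl⟩
      refine subset_span (⟨⟨w.1 ++ [a], by simp; omega⟩, ?_⟩ :
        _ ∈ Set.range fun w : {w : List A // w.length ≤ t+1} => wprod T w.1 *ᵥ x)
      show wprod T (w.1 ++ [a]) *ᵥ x = (T a).mulVecLin (wprod T w.1 *ᵥ x)
      rw [wprod_concat, ← Matrix.mulVec_mulVec, Matrix.mulVecLin_apply]
  have hWprop : ∀ t, Wc t = Wc (t+1) → Wc (t+1) = Wc (t+2) := by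
    intro t h
    rw [hWform (t+1), ← h, ← hWform t]
    exact h
  have hW0 : Wc 0 = span ℂ {x} := by
    apply le_antisymm
    · rw [hWcdef, Submodule.span_le]
      rintro z ⟨w, rfl⟩
      have hwnil : w.1 = [] := List.length_eq_zero_iff.mp (Nat.le_zero.mp w.2)
      have hval : wprod T w.1 *ᵥ x = x := by rw [hwnil, wprod_nil, Matrix.one_mulVec]
      show wprod T w.1 *ᵥ x ∈ _
      rw [hval]
      exact subset_span rfl
    · rw [Submodule.span_le, Set.singleton_subset_iff]
      exact subset_span ⟨⟨[], le_refl 0⟩, by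
        show wprod T ([] : List A) *ᵥ x = x
        rw [wprod_nil, Matrix.one_mulVec]⟩
  have hWfr0 : finrank ℂ (Wc 0) ≤ 1 := by
    rw [hW0]
    by_cases hx : x = 0
    · rw [hx, Submodule.span_zero_singleton]
      simp
    · rw [finrank_span_singleton hx]
  have hWbot : Wc 0 = ⊥ → Wc 1 = ⊥ := by
    intro h
    have hx : x = 0 := Submodule.span_singleton_eq_bot.mp (hW0 ▸ h)
    rw [eq_bot_iff, hWcdef, Submodule.span_le]
    rintro z ⟨w, rfl⟩
    show wprod T w.1 *ᵥ x ∈ (⊥ : Submodule ℂ (Fin d → ℂ))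
    rw [hx, Matrix.mulVec_zero]
    simp
  -- chain facts for N
  have hNstep : ∀ s, N (s+1) ≤ N s := by
    intro s u hu
    rw [memN] at hu ⊢
    intro v hv
    exact hu v (by omega)
  have hNform : ∀ s, N (s+1) = N s ⊓ ⨅ a : A, (N s).comap (T a).mulVecLin := by
    intro s
    have hcons : ∀ (a : A) (v : List A) (u : Fin d → ℂ),
        y ⬝ᵥ (wprod T (a :: v) *ᵥ u) = y ⬝ᵥ (wprod T v *ᵥ ((T a).mulVecLin u)) := by
      intro a v u
      rw [wprod_cons, Matrix.mulVecLin_apply, Matrix.mulVec_mulVec]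
    apply le_antisymm
    · refine le_inf (hNstep s) (le_iInf fun a => ?_)
      intro u hu
      rw [Submodule.mem_comap, memN]
      intro v hv
      rw [← hcons]
      exact (memN _ _).mp hu (a :: v) (by simp; omega)
    · rintro u hu
      rw [Submodule.mem_inf] at hu
      obtain ⟨h1, h2⟩ := hu
      rw [memN]
      intro v hv
      cases v with
      | nil => exact (memN _ _).mp h1 [] (by simp)
      | cons a v =>
        have ha := (Submodule.mem_iInf _).mp h2 a
        rw [Submodule.mem_comap] at ha
        rw [hcons]
        exact (memN _ _).mp ha v (by simp at hv; omega)
  have hNprop : ∀ s, N s = N (s+1) → N (s+1) = N (s+2) := by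
    intro s h
    rw [hNform (s+1), ← h, ← hNform s]
    exact h
  have hN0 : N 0 = LinearMap.ker (ell []) := by
    ext u
    rw [memN, LinearMap.mem_ker, ellapp]
    constructor
    · intro h; exact h [] (by simp)
    · intro h v hv
      have hv0 : v = [] := List.length_eq_zero_iff.mp (Nat.le_zero.mp hv)
      rw [hv0]; exact h
  have hNfr0 : d ≤ finrank ℂ (N 0) + 1 := by
    have h1 := LinearMap.finrank_range_add_finrank_ker (ell [])
    rw [Module.finrank_fin_fun] at h1
    have h2 : finrank ℂ (LinearMap.range (ell [])) ≤ 1 := by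
      have := Submodule.finrank_le (LinearMap.range (ell []))
      rwa [Module.finrank_self] at this
    rw [hN0]
    omega
  have hNtop : N 0 = ⊤ → N 1 = ⊤ := by
    intro h
    have hy0 : ∀ u : Fin d → ℂ, y ⬝ᵥ u = 0 := by
      intro u
      have hu : u ∈ N 0 := by rw [h]; trivial
      have := (memN 0 u).mp hu [] (by simp)
      rwa [wprod_nil, Matrix.one_mulVec] at this
    rw [eq_top_iff]
    intro u _
    rw [memN]
    intro v hv
    exact hy0 _
  -- stabilization
  have hWstab : ∀ s, d - 1 ≤ s → Wc s = Wc (d-1) :=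
    chain_up hd (le_of_eq (Module.finrank_fin_fun ℂ)) Wc hWstep hWprop hWfr0 hWbot
  have hNstab : ∀ s, d - 1 ≤ s → N s = N (d-1) :=
    chain_down hd (Module.finrank_fin_fun ℂ) N hNstep hNprop hNfr0 hNtop
  -- kernels of L
  have hkerL : ∀ s, LinearMap.ker (L s) = N s := by
    intro s
    ext u
    rw [LinearMap.mem_ker, memN, funext_iff]
    constructor
    · intro h v hv; exact h ⟨v, hv⟩
    · intro h v; exact h v.1 v.2
  -- columns
  have hSLW : ∀ s t : ℕ, s + t ≤ n →
      span ℂ (Set.range fun w : {w : List A // w.length ≤ t} =>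
        fun v : {v : List A // v.length ≤ s} => ((p (w.1 ++ v.1) : ℝ) : ℂ))
      = (Wc t).map (L s) := by
    intro s t hst
    rw [hWcdef, Submodule.map_span, ← Set.range_comp]
    have hfun : (fun w : {w : List A // w.length ≤ t} =>
        fun v : {v : List A // v.length ≤ s} => ((p (w.1 ++ v.1) : ℝ) : ℂ))
        = (⇑(L s) ∘ fun w : {w : List A // w.length ≤ t} => wprod T w.1 *ᵥ x) := by
      funext w v
      show ((p (w.1 ++ v.1) : ℝ) : ℂ) = L s (wprod T w.1 *ᵥ x) v
      rw [Lapp, Matrix.mulVec_mulVec, ← wprod_append]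
      exact hpall (w.1 ++ v.1) (by rw [List.length_append]; have := w.2; have := v.2; omega)
    rw [hfun]
  -- rank formula
  have formula : ∀ (s : ℕ) (Q : Submodule ℂ (Fin d → ℂ)),
      finrank ℂ (Q.map (L s)) +
        finrank ℂ (Submodule.comap Q.subtype (LinearMap.ker (L s))) = finrank ℂ Q := by
    intro s Q
    have h1 := LinearMap.finrank_range_add_finrank_ker ((L s).domRestrict Q)
    rwa [LinearMap.range_domRestrict, LinearMap.ker_domRestrict] at h1
  have main : ∀ s t : ℕ, d - 1 ≤ s → d - 1 ≤ t → s + t ≤ n →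
      finrank ℂ (span ℂ (Set.range fun w : {w : List A // w.length ≤ t} =>
        fun v : {v : List A // v.length ≤ s} => ((p (w.1 ++ v.1) : ℝ) : ℂ)))
      + finrank ℂ (Submodule.comap (Wc (d-1)).subtype (N (d-1))) = finrank ℂ (Wc (d-1)) := by
    intro s t hs ht hst
    rw [hSLW s t hst, hWstab t ht]
    have h1 := formula s (Wc (d-1))
    rwa [hkerL s, hNstab s hs] at h1
  -- translate hankelRank to complex span finranks
  have tr : ∀ s t : ℕ, hankelRank p s t =
      ((finrank ℂ (span ℂ (Set.range fun w : {w : List A // w.length ≤ t} =>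
        fun v : {v : List A // v.length ≤ s} => ((p (w.1 ++ v.1) : ℝ) : ℂ)))) : Cardinal) := by
    intro s t
    rw [hankelRank_eq_finrank]
    exact congrArg Nat.cast
      (rank_real_eq_complex (fun w : {w : List A // w.length ≤ t} =>
        fun v : {v : List A // v.length ≤ s} => p (w.1 ++ v.1)))
  have e1 := main (d-1) (d-1) le_rfl le_rfl (by omega)
  have e2 := main ((n+1)/2) (n/2) (by omega) (by omega) (by omega)
  have e3 := main (n/2) ((n+1)/2) (by omega) (by omega) (by omega)
  have hbound : finrank ℂ (Wc (d-1)) ≤ d := by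
    have := Submodule.finrank_le (Wc (d-1))
    rwa [Module.finrank_fin_fun] at this
  refine ⟨?_, ?_, ?_⟩
  · rw [tr]
    have : finrank ℂ (span ℂ (Set.range fun w : {w : List A // w.length ≤ d-1} =>
        fun v : {v : List A // v.length ≤ d-1} => ((p (w.1 ++ v.1) : ℝ) : ℂ))) ≤ d := by omega
    exact_mod_cast this
  · rw [tr, tr]
    have : finrank ℂ (span ℂ (Set.range fun w : {w : List A // w.length ≤ n/2} =>
        fun v : {v : List A // v.length ≤ (n+1)/2} => ((p (w.1 ++ v.1) : ℝ) : ℂ)))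
        = finrank ℂ (span ℂ (Set.range fun w : {w : List A // w.length ≤ d-1} =>
        fun v : {v : List A // v.length ≤ d-1} => ((p (w.1 ++ v.1) : ℝ) : ℂ))) := by omega
    exact_mod_cast this
  · rw [tr, tr]
    have : finrank ℂ (span ℂ (Set.range fun w : {w : List A // w.length ≤ (n+1)/2} =>
        fun v : {v : List A // v.length ≤ n/2} => ((p (w.1 ++ v.1) : ℝ) : ℂ)))
        = finrank ℂ (span ℂ (Set.range fun w : {w : List A // w.length ≤ d-1} =>
        fun v : {v : List A // v.length ≤ d-1} => ((p (w.1 ++ v.1) : ℝ) : ℂ))) := by omega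
    exact_mod_cast this

lemma backward {d : ℕ} (hd : 1 ≤ d) (hn : 2*d - 1 ≤ n)
    (hext : ∀ u : List A, u.length < n →
      p u = ∑ f : Fin (n - u.length) → A, p (u ++ List.ofFn f))
    (h1 : hankelRank p (d-1) (d-1) ≤ (d : Cardinal))
    (h2 : hankelRank p ((n+1)/2) (n/2) = hankelRank p (d-1) (d-1))
    (h3 : hankelRank p (n/2) ((n+1)/2) = hankelRank p (d-1) (d-1)) :
    ∃ (T : A → Matrix (Fin d) (Fin d) ℂ) (x y : Fin d → ℂ),
      y ᵥ* (∑ a : A, T a) = y ∧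
      ∀ v : List A, v.length = n → (p v : ℂ) = y ⬝ᵥ (wordProd T v) *ᵥ x := by
  classical
  set m := n / 2 with hm
  set Mn := (n+1) / 2 with hMn
  have hmMn : m + Mn = n := by omega
  have hdm : d - 1 ≤ m := by omega
  have hdM : d ≤ Mn := by omega
  have hdM' : d - 1 ≤ Mn := by omega
  have hmle : m ≤ Mn := by omega
  have hMm1 : Mn ≤ m + 1 := by omega
  -- finrank versions of the hypotheses
  have fr2 : finrank ℝ (HS p Mn m) = finrank ℝ (HS p (d-1) (d-1)) := by
    have := h2
    rw [hankelRank_eq_finrank, hankelRank_eq_finrank] at this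
    exact_mod_cast this
  have fr3 : finrank ℝ (HS p m Mn) = finrank ℝ (HS p (d-1) (d-1)) := by
    have := h3
    rw [hankelRank_eq_finrank, hankelRank_eq_finrank] at this
    exact_mod_cast this
  set r := finrank ℝ (HS p (d-1) (d-1)) with hrdef
  have hrd : r ≤ d := by
    have := h1
    rw [hankelRank_eq_finrank] at this
    exact_mod_cast this
  -- squeezes
  have frdm : finrank ℝ (HS p (d-1) m) = r := by
    apply le_antisymm
    · exact le_trans (finrank_HS_mono p hdM' le_rfl) (le_of_eq fr2)
    · exact finrank_HS_mono p le_rfl hdm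
  have frdM : finrank ℝ (HS p (d-1) Mn) = r := by
    apply le_antisymm
    · exact le_trans (finrank_HS_mono p hdm le_rfl) (le_of_eq fr3)
    · exact finrank_HS_mono p le_rfl hdM'
  have hVm : HS p (d-1) (d-1) = HS p (d-1) m :=
    Submodule.eq_of_le_of_finrank_le (HS_mono_right p (d-1) hdm) (le_of_eq frdm)
  have hVM : HS p (d-1) (d-1) = HS p (d-1) Mn :=
    Submodule.eq_of_le_of_finrank_le (HS_mono_right p (d-1) hdM') (le_of_eq frdM)
  set V := HS p (d-1) (d-1) with hVdef
  set V' := HS p Mn m with hV'def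
  -- restriction map
  set res : ({v : List A // v.length ≤ Mn} → ℝ) →ₗ[ℝ] ({v : List A // v.length ≤ d-1} → ℝ) :=
    LinearMap.funLeft ℝ ℝ (fun v : {v : List A // v.length ≤ d-1} =>
      (⟨v.1, v.2.trans hdM'⟩ : {v : List A // v.length ≤ Mn})) with hresdef
  have hmapres : V'.map res = V := by
    rw [hV'def, HS, Submodule.map_span, ← Set.range_comp]
    have hfun : (⇑res ∘ fun w : {w : List A // w.length ≤ m} =>
        fun v : {v : List A // v.length ≤ Mn} => p (w.1 ++ v.1))
        = (fun w : {w : List A // w.length ≤ m} =>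
            fun v : {v : List A // v.length ≤ d-1} => p (w.1 ++ v.1)) := rfl
    rw [hfun]
    exact (hVm.trans rfl).symm
  -- the comparison isomorphism
  set f : V' →ₗ[ℝ] V := LinearMap.codRestrict V (res.comp V'.subtype)
    (fun c => by rw [← hmapres]; exact Submodule.mem_map_of_mem c.2) with hfdef
  have hsurj : Function.Surjective f := by
    rintro ⟨v, hv⟩
    rw [← hmapres] at hv
    obtain ⟨z, hz, hzv⟩ := hv
    exact ⟨⟨z, hz⟩, Subtype.ext hzv⟩
  have hfinrank' : finrank ℝ V' = r := fr2
  have hinj : Function.Injective f := by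
    rw [← LinearMap.ker_eq_bot]
    have hr1 := LinearMap.finrank_range_add_finrank_ker f
    rw [LinearMap.range_eq_top.mpr hsurj, finrank_top] at hr1
    have : finrank ℝ V = r := rfl
    have hker0 : finrank ℝ (LinearMap.ker f) = 0 := by omega
    exact Submodule.finrank_eq_zero.mp hker0
  set e : V' ≃ₗ[ℝ] V := LinearEquiv.ofBijective f ⟨hinj, hsurj⟩ with hedef
  set ext : V →ₗ[ℝ] ({v : List A // v.length ≤ Mn} → ℝ) :=
    V'.subtype.comp (e.symm : V →ₗ[ℝ] V') with hextdef
  have res_ext : ∀ g : V, res (ext g) = g.1 := by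
    intro g
    have h := e.apply_symm_apply g
    calc res (ext g) = (f (e.symm g)).1 := rfl
      _ = g.1 := by rw [show f (e.symm g) = g from h]
  have ext_eval_short : ∀ (g : V) (v : List A) (hv : v.length ≤ d-1),
      ext g ⟨v, hv.trans hdM'⟩ = g.1 ⟨v, hv⟩ := by
    intro g v hv
    exact congrFun (res_ext g) ⟨v, hv⟩
  -- columns
  set colS : List A → ({v : List A // v.length ≤ d-1} → ℝ) := fun w v => p (w ++ v.1)
    with hcolSdef
  set colM : List A → ({v : List A // v.length ≤ Mn} → ℝ) := fun w v => p (w ++ v.1)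
    with hcolMdef
  have memV : ∀ w : List A, w.length ≤ Mn → colS w ∈ V := by
    intro w hw
    rw [hVM]
    exact Submodule.subset_span ⟨⟨w, hw⟩, rfl⟩
  have memV' : ∀ w : List A, w.length ≤ m → colM w ∈ V' := by
    intro w hw
    exact Submodule.subset_span ⟨⟨w, hw⟩, rfl⟩
  have ext_col : ∀ (w : List A) (hw : w.length ≤ m),
      ext ⟨colS w, memV w (hw.trans hmle)⟩ = colM w := by
    intro w hw
    have h1 : e ⟨colM w, memV' w hw⟩ = ⟨colS w, memV w (hw.trans hmle)⟩ := by
      apply Subtype.ext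
      rfl
    have h2 : e.symm ⟨colS w, memV w (hw.trans hmle)⟩ = ⟨colM w, memV' w hw⟩ := by
      rw [← h1, e.symm_apply_apply]
    show V'.subtype (e.symm ⟨colS w, memV w (hw.trans hmle)⟩) = colM w
    rw [h2]
    rfl
  -- the shifted maps
  set shift : A → (({v : List A // v.length ≤ Mn} → ℝ) →ₗ[ℝ]
      ({v : List A // v.length ≤ d-1} → ℝ)) := fun a =>
    LinearMap.funLeft ℝ ℝ (fun v : {v : List A // v.length ≤ d-1} =>
      (⟨a :: v.1, by have := v.2; simp; omega⟩ : {v : List A // v.length ≤ Mn}))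
    with hshiftdef
  set raw : A → (V →ₗ[ℝ] ({v : List A // v.length ≤ d-1} → ℝ)) :=
    fun a => (shift a).comp ext with hrawdef
  have raw_col : ∀ (a : A) (w : List A) (hw : w.length ≤ m),
      raw a ⟨colS w, memV w (hw.trans hmle)⟩ = colS (w ++ [a]) := by
    intro a w hw
    have : raw a ⟨colS w, memV w (hw.trans hmle)⟩ = shift a (colM w) := by
      show shift a (ext ⟨colS w, memV w (hw.trans hmle)⟩) = shift a (colM w)
      rw [ext_col w hw]
    rw [this]
    funext v
    show p (w ++ (a :: v.1)) = p ((w ++ [a]) ++ v.1)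
    simp
  have raw_memV : ∀ (a : A) (g : V), raw a g ∈ V := by
    intro a g
    have hg : g.1 ∈ Submodule.span ℝ (Set.range
        (fun w : {w : List A // w.length ≤ d-1} =>
          fun v : {v : List A // v.length ≤ d-1} => p (w.1 ++ v.1))) := g.2
    have main : ∀ (x) (hx : x ∈ Submodule.span ℝ (Set.range
        (fun w : {w : List A // w.length ≤ d-1} =>
          fun v : {v : List A // v.length ≤ d-1} => p (w.1 ++ v.1)))),
        raw a ⟨x, hx⟩ ∈ V := by
      intro x hx
      induction hx using Submodule.span_induction with
      | mem z hz =>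
        obtain ⟨w, rfl⟩ := hz
        have hw : w.1.length ≤ m := w.2.trans hdm
        have hcol : (⟨(fun v : {v : List A // v.length ≤ d-1} => p (w.1 ++ v.1)), _⟩ : V)
            = ⟨colS w.1, memV w.1 (hw.trans hmle)⟩ := rfl
        rw [hcol, raw_col a w.1 hw]
        exact memV (w.1 ++ [a]) (by simp; omega)
      | zero =>
        rw [show (⟨0, _⟩ : V) = 0 from rfl, map_zero]
        exact Submodule.zero_mem V
      | add z1 z2 hz1 hz2 ih1 ih2 =>
        rw [show (⟨z1 + z2, _⟩ : V) = ⟨z1, hz1⟩ + ⟨z2, hz2⟩ from rfl, map_add]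
        exact Submodule.add_mem V ih1 ih2
      | smul c z hz ih =>
        rw [show (⟨c • z, _⟩ : V) = c • ⟨z, hz⟩ from rfl, _root_.map_smul]
        exact Submodule.smul_mem V c ih
    have := main g.1 hg
    simpa using this
  set Ta : A → Module.End ℝ V := fun a => LinearMap.codRestrict V (raw a) (raw_memV a)
    with hTadef
  have Ta_val : ∀ (a : A) (g : V), (Ta a g : {v : List A // v.length ≤ d-1} → ℝ) = raw a g :=
    fun a g => rfl
  have Ta_col : ∀ (a : A) (w : List A) (hw : w.length ≤ m),
      (Ta a ⟨colS w, memV w (hw.trans hmle)⟩ : {v : List A // v.length ≤ d-1} → ℝ)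
        = colS (w ++ [a]) := by
    intro a w hw
    rw [Ta_val, raw_col a w hw]
  
  set xhat : V := ⟨colS [], memV [] (by simp)⟩ with hxhatdef
  have claimA : ∀ (w : List A) (hw : w.length ≤ m),
      ((wprod Ta w xhat : V) : {v : List A // v.length ≤ d-1} → ℝ) = colS w := by
    intro w
    induction w using List.reverseRecOn with
    | nil =>
      intro _
      rw [wprod_nil]
      rfl
    | append_singleton u a ih =>
      intro hw
      have hu : u.length ≤ m := by simp at hw; omega
      rw [wprod_concat, Module.End.mul_apply]
      have hst : (wprod Ta u xhat : V) = ⟨colS u, memV u (hu.trans hmle)⟩ :=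
        Subtype.ext (ih hu)
      rw [hst]
      exact Ta_col a u hu
  have ext_eval : ∀ (w : List A), w.length ≤ d → ∀ (u : List A), u.length + 1 ≤ Mn →
      ∀ (hmem : colS w ∈ V) (hu' : u.length ≤ Mn),
      ext ⟨colS w, hmem⟩ ⟨u, hu'⟩ = p (w ++ u) := by
    intro w hwd u hu hmem hu'
    by_cases hdm2 : d ≤ m
    · have hwm : w.length ≤ m := hwd.trans hdm2
      have : (⟨colS w, hmem⟩ : V) = ⟨colS w, memV w (hwm.trans hmle)⟩ := rfl
      rw [this, ext_col w hwm]
    · have hmd : m = d - 1 := by omega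
      have hud : u.length ≤ d - 1 := by omega
      have := ext_eval_short ⟨colS w, hmem⟩ u hud
      have h2 : (⟨u, hud.trans hdM'⟩ : {v : List A // v.length ≤ Mn}) = ⟨u, hu'⟩ := rfl
      rw [h2] at this
      rw [this]
  have comm : ∀ (a : A) (u : List A) (hu : u.length + 1 ≤ Mn) (g : V)
      (hu1 : u.length ≤ Mn) (hu2 : (a :: u).length ≤ Mn),
      ext (Ta a g) ⟨u, hu1⟩ = ext g ⟨a :: u, hu2⟩ := by
    intro a u hu g hu1 hu2
    have hg : g.1 ∈ Submodule.span ℝ (Set.range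
        (fun w : {w : List A // w.length ≤ d-1} =>
          fun v : {v : List A // v.length ≤ d-1} => p (w.1 ++ v.1))) := g.2
    have main : ∀ (x) (hx : x ∈ Submodule.span ℝ (Set.range
        (fun w : {w : List A // w.length ≤ d-1} =>
          fun v : {v : List A // v.length ≤ d-1} => p (w.1 ++ v.1)))),
        ext (Ta a ⟨x, hx⟩) ⟨u, hu1⟩ = ext ⟨x, hx⟩ ⟨a :: u, hu2⟩ := by
      intro x hx
      induction hx using Submodule.span_induction with
      | mem z hz =>
        obtain ⟨w, rfl⟩ := hz
        have hw : w.1.length ≤ d - 1 := w.2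
        have hwm : w.1.length ≤ m := hw.trans hdm
        have hcol : (⟨(fun v : {v : List A // v.length ≤ d-1} => p (w.1 ++ v.1)), _⟩ : V)
            = ⟨colS w.1, memV w.1 (hwm.trans hmle)⟩ := rfl
        rw [hcol]
        have hmem2 : colS (w.1 ++ [a]) ∈ V := by
          rw [← Ta_col a w.1 hwm]
          exact (Ta a ⟨colS w.1, memV w.1 (hwm.trans hmle)⟩).2
        have hTa : Ta a ⟨colS w.1, memV w.1 (hwm.trans hmle)⟩
            = ⟨colS (w.1 ++ [a]), hmem2⟩ :=
          Subtype.ext (Ta_col a w.1 hwm)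
        rw [hTa, ext_eval (w.1 ++ [a]) (by simp; omega) u hu _ hu1]
        have hext2 : ext ⟨colS w.1, memV w.1 (hwm.trans hmle)⟩ ⟨a :: u, hu2⟩
            = p (w.1 ++ (a :: u)) := by
          rw [ext_col w.1 hwm]
        rw [hext2]
        simp
      | zero =>
        rw [show (⟨0, _⟩ : V) = 0 from rfl, map_zero, map_zero]
        simp
      | add z1 z2 hz1 hz2 ih1 ih2 =>
        rw [show (⟨z1 + z2, _⟩ : V) = ⟨z1, hz1⟩ + ⟨z2, hz2⟩ from rfl, map_add, map_add,
          map_add, Pi.add_apply, Pi.add_apply, ih1, ih2]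
      | smul c z hz ih =>
        rw [show (⟨c • z, _⟩ : V) = c • ⟨z, hz⟩ from rfl, _root_.map_smul, _root_.map_smul,
          _root_.map_smul, Pi.smul_apply, Pi.smul_apply, ih]
    have := main g.1 hg
    simpa using this
  have claimB : ∀ (u : List A) (hu : u.length ≤ Mn) (g : V),
      ((wprod Ta u g : V) : {v : List A // v.length ≤ d-1} → ℝ) ⟨[], by simp⟩
        = ext g ⟨u, hu⟩ := by
    intro u
    induction u with
    | nil =>
      intro hu g
      rw [wprod_nil]
      have := ext_eval_short g [] (by simp)
      have h2 : (⟨[], (by simp : ([] : List A).length ≤ d - 1).trans hdM'⟩ :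
          {v : List A // v.length ≤ Mn}) = ⟨[], hu⟩ := rfl
      rw [h2] at this
      exact this.symm
    | cons a u ih =>
      intro hu g
      rw [wprod_cons, Module.End.mul_apply]
      have hu' : u.length ≤ Mn := by simp at hu; omega
      rw [ih hu' (Ta a g)]
      exact comm a u (by simpa using hu) g hu' hu
  have eigenV : ∀ g : V,
      ∑ a : A, ((Ta a g : V) : {v : List A // v.length ≤ d-1} → ℝ) ⟨[], by simp⟩
        = (g : {v : List A // v.length ≤ d-1} → ℝ) ⟨[], by simp⟩ := by
    intro g
    have hg : g.1 ∈ Submodule.span ℝ (Set.range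
        (fun w : {w : List A // w.length ≤ d-1} =>
          fun v : {v : List A // v.length ≤ d-1} => p (w.1 ++ v.1))) := g.2
    have main : ∀ (x) (hx : x ∈ Submodule.span ℝ (Set.range
        (fun w : {w : List A // w.length ≤ d-1} =>
          fun v : {v : List A // v.length ≤ d-1} => p (w.1 ++ v.1)))),
        ∑ a : A, ((Ta a ⟨x, hx⟩ : V) : {v : List A // v.length ≤ d-1} → ℝ) ⟨[], by simp⟩
          = x ⟨[], by simp⟩ := by
      intro x hx
      induction hx using Submodule.span_induction with
      | mem z hz =>
        obtain ⟨w, rfl⟩ := hz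
        have hw : w.1.length ≤ d - 1 := w.2
        have hwm : w.1.length ≤ m := hw.trans hdm
        have hcol : (⟨(fun v : {v : List A // v.length ≤ d-1} => p (w.1 ++ v.1)), _⟩ : V)
            = ⟨colS w.1, memV w.1 (hwm.trans hmle)⟩ := rfl
        rw [hcol]
        have hval : ∀ a : A,
            ((Ta a ⟨colS w.1, memV w.1 (hwm.trans hmle)⟩ : V) :
              {v : List A // v.length ≤ d-1} → ℝ) ⟨[], by simp⟩ = p (w.1 ++ [a]) := by
          intro a
          rw [Ta_col a w.1 hwm]
          show p ((w.1 ++ [a]) ++ []) = p (w.1 ++ [a])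
          rw [List.append_nil]
        rw [Finset.sum_congr rfl (fun a _ => hval a)]
        show _ = p (w.1 ++ [])
        rw [List.append_nil]
        exact (psum hext w.1 (by omega)).symm
      | zero =>
        rw [show (⟨0, _⟩ : V) = 0 from rfl]
        simp
      | add z1 z2 hz1 hz2 ih1 ih2 =>
        rw [show (⟨z1 + z2, _⟩ : V) = ⟨z1, hz1⟩ + ⟨z2, hz2⟩ from rfl]
        simp only [map_add, Submodule.coe_add, Pi.add_apply]
        rw [Finset.sum_add_distrib, ih1, ih2]
      | smul c z hz ih =>
        rw [show (⟨c • z, _⟩ : V) = c • ⟨z, hz⟩ from rfl]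
        simp only [_root_.map_smul, Submodule.coe_smul, Pi.smul_apply, smul_eq_mul]
        rw [← Finset.mul_sum, ih]
    have := main g.1 hg
    simpa using this
  -- finite-dimensional bookkeeping
  have hfinV : finrank ℝ V = r := rfl
  set rV := finrank ℝ V with hrVdef
  have hrVd : rV ≤ d := hrd
  set bV : Basis (Fin rV) ℝ V := Module.finBasis ℝ V with hbVdef
  set iota : V →ₗ[ℝ] (Fin d → ℝ) :=
    { toFun := fun g i => if h : (i : ℕ) < rV then bV.repr g ⟨i.1, h⟩ else 0
      map_add' := by
        intro g1 g2; funext i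
        by_cases h : (i : ℕ) < rV <;> simp [h]
      map_smul' := by
        intro c g; funext i
        by_cases h : (i : ℕ) < rV <;> simp [h] } with hiotadef
  set piL : (Fin d → ℝ) →ₗ[ℝ] V :=
    { toFun := fun u => ∑ j : Fin rV, u (Fin.castLE hrVd j) • bV j
      map_add' := by
        intro u1 u2
        show (∑ j : Fin rV, (u1 + u2) (Fin.castLE hrVd j) • bV j)
            = (∑ j : Fin rV, u1 (Fin.castLE hrVd j) • bV j)
              + (∑ j : Fin rV, u2 (Fin.castLE hrVd j) • bV j)
        rw [← Finset.sum_add_distrib]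
        exact Finset.sum_congr rfl fun j _ => by rw [Pi.add_apply, add_smul]
      map_smul' := by
        intro c u
        show (∑ j : Fin rV, (c • u) (Fin.castLE hrVd j) • bV j)
            = c • ∑ j : Fin rV, u (Fin.castLE hrVd j) • bV j
        rw [Finset.smul_sum]
        exact Finset.sum_congr rfl fun j _ => by rw [Pi.smul_apply, smul_smul, smul_eq_mul] }
    with hpiLdef
  have hpi : ∀ g : V, piL (iota g) = g := by
    intro g
    show ∑ j : Fin rV, iota g (Fin.castLE hrVd j) • bV j = g
    have hval : ∀ j : Fin rV, iota g (Fin.castLE hrVd j) = bV.repr g j := by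
      intro j
      show (if h : ((Fin.castLE hrVd j : Fin d) : ℕ) < rV then
        bV.repr g ⟨(Fin.castLE hrVd j : Fin d).1, h⟩ else 0) = bV.repr g j
      have hj : ((Fin.castLE hrVd j : Fin d) : ℕ) < rV := j.isLt
      rw [dif_pos hj]
      rfl
    rw [Finset.sum_congr rfl (fun j _ => by rw [hval j])]
    exact bV.sum_repr g
  set Mats : A → Matrix (Fin d) (Fin d) ℝ :=
    fun a => LinearMap.toMatrix' (iota ∘ₗ (Ta a) ∘ₗ piL) with hMatsdef
  have matApp : ∀ (a : A) (u : Fin d → ℝ), Mats a *ᵥ u = iota (Ta a (piL u)) := by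
    intro a u
    have h := Matrix.toLin'_toMatrix' (iota ∘ₗ (Ta a) ∘ₗ piL)
    calc Mats a *ᵥ u = Matrix.toLin' (Mats a) u := (Matrix.toLin'_apply _ _).symm
      _ = (iota ∘ₗ (Ta a) ∘ₗ piL) u := by rw [hMatsdef, h]
      _ = iota (Ta a (piL u)) := rfl
  set evnil : V →ₗ[ℝ] ℝ :=
    (LinearMap.proj (⟨[], by simp⟩ : {v : List A // v.length ≤ d-1})).comp V.subtype
    with hevnildef
  have evnil_apply : ∀ g : V,
      evnil g = (g : {v : List A // v.length ≤ d-1} → ℝ) ⟨[], by simp⟩ := fun g => rfl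
  set xv : Fin d → ℝ := iota xhat with hxvdef
  set yv : Fin d → ℝ := fun i => evnil (piL (Pi.single i (1:ℝ))) with hyvdef
  have ydot : ∀ u : Fin d → ℝ, yv ⬝ᵥ u = evnil (piL u) := by
    intro u
    have hrepr : u = ∑ i : Fin d, u i • (Pi.single i (1 : ℝ) : Fin d → ℝ) := by
      funext j
      rw [Finset.sum_apply]
      simp [Pi.single_apply, Finset.sum_ite_eq']
    calc yv ⬝ᵥ u = ∑ i : Fin d, u i * evnil (piL (Pi.single i (1:ℝ))) := by
          simp [dotProduct, hyvdef, mul_comm]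
      _ = evnil (piL (∑ i : Fin d, u i • (Pi.single i (1:ℝ) : Fin d → ℝ))) := by
          rw [map_sum, map_sum]
          exact Finset.sum_congr rfl fun i _ => by
            rw [_root_.map_smul, _root_.map_smul, smul_eq_mul]
      _ = evnil (piL u) := by rw [← hrepr]
  have wordmat : ∀ (w : List A) (g : V),
      wordProd Mats w *ᵥ iota g = iota (wprod Ta w g) := by
    intro w g
    induction w using List.reverseRecOn with
    | nil =>
      rw [wordProd_eq_wprod, wprod_nil, wprod_nil]
      rw [Matrix.one_mulVec]
      rfl
    | append_singleton u a ih =>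
      rw [wordProd_eq_wprod, wprod_concat, wprod_concat, ← Matrix.mulVec_mulVec]
      rw [← wordProd_eq_wprod, ih, matApp, hpi]
      rfl
  -- real version of the two goals
  have realeig : yv ᵥ* (∑ a : A, Mats a) = yv := by
    funext j
    have hterm : ∀ a : A, yv ⬝ᵥ (Mats a *ᵥ Pi.single j (1:ℝ))
        = evnil (Ta a (piL (Pi.single j (1:ℝ)))) := by
      intro a; rw [matApp, ydot, hpi]
    have hstep1 : (yv ᵥ* (∑ a : A, Mats a)) j = yv ⬝ᵥ (fun i => (∑ a : A, Mats a) i j) := rfl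
    have hcol : (fun i => (∑ a : A, Mats a) i j) = ∑ a : A, (Mats a *ᵥ Pi.single j (1:ℝ)) := by
      funext i
      simp only [Finset.sum_apply, Matrix.sum_apply]
      exact Finset.sum_congr rfl fun a _ => by simp [Matrix.mulVec_single]
    have hdsum : yv ⬝ᵥ (∑ a : A, (Mats a *ᵥ Pi.single j (1:ℝ)))
        = ∑ a : A, yv ⬝ᵥ (Mats a *ᵥ Pi.single j (1:ℝ)) := by
      simp only [dotProduct, Finset.sum_apply, Finset.mul_sum]
      rw [Finset.sum_comm]
    have heig := eigenV (piL (Pi.single j (1:ℝ)))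
    calc (yv ᵥ* (∑ a : A, Mats a)) j
        = yv ⬝ᵥ (∑ a : A, (Mats a *ᵥ Pi.single j (1:ℝ))) := by rw [hstep1, hcol]
      _ = ∑ a : A, yv ⬝ᵥ (Mats a *ᵥ Pi.single j (1:ℝ)) := hdsum
      _ = ∑ a : A, evnil (Ta a (piL (Pi.single j (1:ℝ)))) :=
          Finset.sum_congr rfl fun a _ => hterm a
      _ = evnil (piL (Pi.single j (1:ℝ))) := by
          rw [Finset.sum_congr rfl
            (fun a _ => evnil_apply (Ta a (piL (Pi.single j (1:ℝ)))))]
          rw [heig, ← evnil_apply]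
      _ = yv j := rfl
  have realp : ∀ v : List A, v.length = n → p v = yv ⬝ᵥ (wordProd Mats v) *ᵥ xv := by
    intro v hv
    rw [hxvdef, wordmat v xhat, ydot, hpi]
    have hsplit : v = v.take m ++ v.drop m := (List.take_append_drop m v).symm
    have htake : (v.take m).length = m := by rw [List.length_take]; omega
    have hdropl : (v.drop m).length = Mn := by rw [List.length_drop]; omega
    rw [evnil_apply]
    conv_lhs => rw [hsplit]
    conv_rhs => rw [hsplit, wprod_append, Module.End.mul_apply]
    have hg0 : (wprod Ta (v.take m) xhat : V) = ⟨colS (v.take m), memV _ (by omega)⟩ :=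
      Subtype.ext (claimA (v.take m) (by omega))
    rw [hg0]
    rw [claimB (v.drop m) (by omega) _]
    rw [ext_col (v.take m) (by omega)]
  -- complexify
  refine ⟨fun a => (Mats a).map (algebraMap ℝ ℂ),
    fun i => ((xv i : ℝ) : ℂ), fun i => ((yv i : ℝ) : ℂ), ?_, ?_⟩
  · funext j
    have hsum : ∑ a : A, (Mats a).map (algebraMap ℝ ℂ) = (∑ a : A, Mats a).map (algebraMap ℝ ℂ) := by
      have h := map_sum (RingHom.mapMatrix (algebraMap ℝ ℂ) :
        Matrix (Fin d) (Fin d) ℝ →+* Matrix (Fin d) (Fin d) ℂ) Mats Finset.univ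
      simp only [RingHom.mapMatrix_apply] at h
      exact h.symm
    rw [hsum]
    have := congrFun realeig j
    simp only [Matrix.vecMul, dotProduct, Matrix.map_apply] at this ⊢
    push_cast
    rw [← this]
    push_cast
    rfl
  · intro v hv
    have hword : wordProd (fun a => (Mats a).map (algebraMap ℝ ℂ)) v
        = (wordProd Mats v).map (algebraMap ℝ ℂ) := by
      rw [wordProd_eq_wprod, wordProd_eq_wprod]
      unfold wprod
      have h1 : v.reverse.map (fun a => (Mats a).map (algebraMap ℝ ℂ))
          = (v.reverse.map Mats).map (RingHom.mapMatrix (algebraMap ℝ ℂ)) := by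
        rw [List.map_map]
        rfl
      rw [h1]
      have := (map_list_prod (RingHom.mapMatrix (algebraMap ℝ ℂ) :
        Matrix (Fin d) (Fin d) ℝ →+* Matrix (Fin d) (Fin d) ℂ) (v.reverse.map Mats)).symm
      simpa [RingHom.mapMatrix_apply] using this
    rw [hword, realp v hv]
    simp only [dotProduct, Matrix.mulVec, Matrix.map_apply]
    push_cast
    rfl

end Stmt7Aux

/-- For `d ≥ 1`, `n ≥ 2d−1` and a nonnegative family `(p(v))_{v ∈ Σⁿ}`,
extended to shorter strings by `p(u) = ∑_{v ∈ Σ^{n−|u|}} p(uv)`: the distribution lies in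
the image of the `d`-dimensional model `𝐠_{n,d}` (complex parameterizations with
`yᵀ(∑_a T_a) = yᵀ`) iff (a) `rank 𝒫_{p,d−1,d−1} ≤ d` and
(b) `rank 𝒫_{p,⌈n/2⌉,⌊n/2⌋} = rank 𝒫_{p,⌊n/2⌋,⌈n/2⌉} = rank 𝒫_{p,d−1,d−1}`. -/
theorem stmt7 {A : Type*} [Fintype A] [Nonempty A] (d n : ℕ)
    (hd : 1 ≤ d) (hn : 2 * d - 1 ≤ n)
    (p : List A → ℝ)
    (hnonneg : ∀ v : List A, v.length = n → 0 ≤ p v)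
    (hext : ∀ u : List A, u.length < n →
      p u = ∑ f : Fin (n - u.length) → A, p (u ++ List.ofFn f)) :
    (∃ (T : A → Matrix (Fin d) (Fin d) ℂ) (x y : Fin d → ℂ),
        y ᵥ* (∑ a : A, T a) = y ∧
        ∀ v : List A, v.length = n → (p v : ℂ) = y ⬝ᵥ (wordProd T v) *ᵥ x) ↔
      (hankelRank p (d - 1) (d - 1) ≤ (d : Cardinal) ∧
        hankelRank p ((n + 1) / 2) (n / 2) = hankelRank p (d - 1) (d - 1) ∧
        hankelRank p (n / 2) ((n + 1) / 2) = hankelRank p (d - 1) (d - 1)) := by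
  constructor
  · rintro ⟨T, x, y, hy, hp⟩
    exact Stmt7Aux.forward hd hn hext T x y hy hp
  · rintro ⟨h1, h2, h3⟩
    exact Stmt7Aux.backward hd hn hext h1 h2 h3
end

section
/- Let l ≥ 1 and n ≥ 2l, and let H_l denote the class of string functions over Σ associated with an unconstrained hidden Markov process on l hidden states. Then for any family (p(u))_{u∈Σ^{n+1}} of reals: there exists q ∈ H_l with q(u) = p(u) for all u ∈ Σ^{n+1} if and only if (i) for every a ∈ Σ there exists q_a ∈ H_l with q_a(v) = p(av) for all v ∈ Σ^n, and (ii) there exists q' ∈ H_l with q'(v) = Σ_{a∈Σ} p(va) for all v ∈ Σ^n. -/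
open Matrix

/-- `p` is associated with an unconstrained hidden Markov process on `l` hidden states. -/
def IsHMM {A : Type*} [Fintype A] (l : ℕ) (p : List A → ℝ) : Prop :=
  ∃ (Am : Matrix (Fin l) (Fin l) ℝ) (E : Fin l → A → ℝ) (π : Fin l → ℝ),
    (∀ i j, 0 ≤ Am i j) ∧ (∀ i, ∑ j, Am i j = 1) ∧
    (∀ i a, 0 ≤ E i a) ∧ (∀ i, ∑ a : A, E i a = 1) ∧ (∀ i, 0 ≤ π i) ∧
    ∀ v : List A,
      p v = (fun _ => (1 : ℝ)) ⬝ᵥ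
        (wordProd (fun a => Amᵀ * Matrix.diagonal fun i => E i a) v) *ᵥ π


def wp {A R ι : Type*} [Semiring R] [Fintype ι] [DecidableEq ι]
    (T : A → Matrix ι ι R) (v : List A) : Matrix ι ι R :=
  (v.reverse.map T).prod

lemma wordProd_eq_wp {A R : Type*} [Semiring R] {d : ℕ}
    (T : A → Matrix (Fin d) (Fin d) R) (v : List A) : wordProd T v = wp T v := rfl

lemma wp_concat {A R ι : Type*} [Semiring R] [Fintype ι] [DecidableEq ι]
    (T : A → Matrix ι ι R) (v : List A) (a : A) :
    wp T (v ++ [a]) = T a * wp T v := by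
  simp [wp]

lemma wp_cons {A R ι : Type*} [Semiring R] [Fintype ι] [DecidableEq ι]
    (T : A → Matrix ι ι R) (v : List A) (a : A) :
    wp T (a :: v) = wp T v * T a := by
  simp [wp]

/-- marginal property -/
lemma marginal {A : Type*} [Fintype A] {l : ℕ}
    (Am : Matrix (Fin l) (Fin l) ℝ) (E : Fin l → A → ℝ)
    (hA : ∀ i, ∑ j, Am i j = 1) (hE : ∀ i, ∑ a : A, E i a = 1)
    (π : Fin l → ℝ) (v : List A) :
    ∑ a : A, ((fun _ => (1:ℝ)) ⬝ᵥ
        (wp (fun a => Amᵀ * Matrix.diagonal fun i => E i a) (v ++ [a])) *ᵥ π)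
      = (fun _ => (1:ℝ)) ⬝ᵥ
        (wp (fun a => Amᵀ * Matrix.diagonal fun i => E i a) v) *ᵥ π := by
  set T := fun a : A => Amᵀ * Matrix.diagonal fun i => E i a with hT
  have hsum : ∑ a : A, T a = Amᵀ := by
    rw [hT]
    rw [← Finset.mul_sum]
    have : ∑ a : A, (Matrix.diagonal fun i => E i a) = (1 : Matrix (Fin l) (Fin l) ℝ) := by
      ext i j
      by_cases h : i = j
      · subst h; simp [Matrix.sum_apply, Matrix.diagonal_apply, hE i]
      · simp [Matrix.sum_apply, Matrix.diagonal_apply, h, Matrix.one_apply]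
    rw [this, mul_one]
  have key : ∀ y : Fin l → ℝ, (fun _ => (1:ℝ)) ⬝ᵥ Amᵀ *ᵥ y = (fun _ => (1:ℝ)) ⬝ᵥ y := by
    intro y
    rw [dotProduct_mulVec, vecMul_transpose]
    congr 1
    funext i
    simp [mulVec, dotProduct, hA i]
  calc ∑ a : A, ((fun _ => (1:ℝ)) ⬝ᵥ (wp T (v ++ [a])) *ᵥ π)
      = (fun _ => (1:ℝ)) ⬝ᵥ ((∑ a : A, T a) * wp T v) *ᵥ π := by
        simp only [wp_concat]
        simp [Finset.sum_mul, mulVec, dotProduct, Matrix.sum_apply, Finset.mul_sum,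
          Finset.sum_mul]
        rw [Finset.sum_comm]
        exact Finset.sum_congr rfl fun i _ => Finset.sum_comm
      _ = (fun _ => (1:ℝ)) ⬝ᵥ (wp T v) *ᵥ π := by
        rw [hsum, ← Matrix.mulVec_mulVec, key]

/-- If a rational series of dimension `d` vanishes on all words of length `≤ d - 1`,
it vanishes everywhere. -/
lemma vanish {A ι : Type*} [Fintype ι] [DecidableEq ι]
    (M : A → Matrix ι ι ℝ) (u x : ι → ℝ)
    (h : ∀ w : List A, w.length ≤ Fintype.card ι - 1 → u ⬝ᵥ (wp M w) *ᵥ x = 0) :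
    ∀ w : List A, u ⬝ᵥ (wp M w) *ᵥ x = 0 := by
  by_cases hx : x = 0
  · intro w; simp [hx]
  set d := Fintype.card ι with hd
  have hd1 : 1 ≤ d := by
    rcases Nat.eq_zero_or_pos d with h0 | h1
    · exact absurd (funext fun i => absurd (Fintype.card_pos_iff.mpr ⟨i⟩) (by omega)) hx
    · exact h1
  set W : ℕ → Submodule ℝ (ι → ℝ) := fun k =>
    Submodule.span ℝ {y | ∃ w : List A, w.length ≤ k ∧ y = wp M w *ᵥ x} with hW
  have memW : ∀ (w : List A) (k : ℕ), w.length ≤ k → wp M w *ᵥ x ∈ W k := by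
    intro w k hk
    exact Submodule.subset_span ⟨w, hk, rfl⟩
  have mono : ∀ {i j : ℕ}, i ≤ j → W i ≤ W j := by
    intro i j hij
    exact Submodule.span_mono (fun y ⟨w, hw, hy⟩ => ⟨w, hw.trans hij, hy⟩)
  have mapW : ∀ (a : A) (k : ℕ), Submodule.map (M a).mulVecLin (W k) ≤ W (k + 1) := by
    intro a k
    rw [hW, Submodule.map_span, Submodule.span_le]
    rintro y ⟨z, ⟨w, hw, rfl⟩, rfl⟩
    have : (M a).mulVecLin (wp M w *ᵥ x) = wp M (w ++ [a]) *ᵥ x := by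
      rw [wp_concat, ← Matrix.mulVec_mulVec]; rfl
    rw [this]
    exact memW _ _ (by simp; omega)
  have succ_le : ∀ k : ℕ, W (k + 1) ≤ W k ⊔ ⨆ a : A, Submodule.map (M a).mulVecLin (W k) := by
    intro k
    rw [hW, Submodule.span_le]
    rintro y ⟨w, hw, rfl⟩
    rcases List.eq_nil_or_concat w with rfl | ⟨w', a, rfl⟩
    case _ => exact le_sup_left (α := Submodule ℝ (ι → ℝ)) (memW [] k (by simp))
    · have hlen : w'.length ≤ k := by simp at hw; omega
      rw [List.concat_eq_append]
      have : wp M (w' ++ [a]) *ᵥ x = (M a).mulVecLin (wp M w' *ᵥ x) := by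
        rw [wp_concat, ← Matrix.mulVec_mulVec]; rfl
      rw [this]
      have h1 : (M a).mulVecLin (wp M w' *ᵥ x) ∈ Submodule.map (M a).mulVecLin (W k) :=
        ⟨_, memW _ _ hlen, rfl⟩
      exact le_sup_right (α := Submodule ℝ (ι → ℝ))
        (le_iSup (fun a => Submodule.map (M a).mulVecLin (W k)) a h1)
  -- stabilization once equal
  have stab_step : ∀ k : ℕ, W (k + 1) ≤ W k → W (k + 2) ≤ W (k + 1) := by
    intro k hk
    refine (succ_le (k+1)).trans (sup_le le_rfl (iSup_le fun a => ?_))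
    exact (Submodule.map_mono hk).trans (mapW a k)
  -- there exists k ≤ d - 1 with W (k+1) ≤ W k
  have exist_stab : ∃ k : ℕ, k ≤ d - 1 ∧ W (k + 1) ≤ W k := by
    by_contra hc
    push_neg at hc
    have strict : ∀ k : ℕ, k ≤ d - 1 → W k < W (k + 1) := by
      intro k hk
      exact lt_of_le_of_ne (mono (Nat.le_succ k)) (fun he => hc k hk (le_of_eq he.symm))
    have base : 1 ≤ Module.finrank ℝ (W 0) := by
      have hx0 : x ∈ W 0 := by simpa [wp] using memW [] 0 le_rfl
      have : W 0 ≠ ⊥ := fun hb => hx (by simpa [hb] using hx0)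
      have : Nontrivial (W 0) := Submodule.nontrivial_iff_ne_bot.mpr this
      exact Module.finrank_pos_iff.mpr this
    have chain : ∀ k : ℕ, k ≤ d → k + 1 ≤ Module.finrank ℝ (W k) := by
      intro k
      induction k with
      | zero => intro _; exact base
      | succ k ih =>
        intro hk
        have h1 : k ≤ d - 1 := by omega
        have h2 := Submodule.finrank_lt_finrank_of_lt (strict k h1)
        have := ih (by omega)
        omega
    have hle : Module.finrank ℝ (W d) ≤ d := by
      have := Submodule.finrank_le (W d)
      simpa [Module.finrank_fintype_fun_eq_card] using this
    have := chain d le_rfl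
    omega
  obtain ⟨k0, hk0, hstab⟩ := exist_stab
  have hstep : ∀ j : ℕ, k0 ≤ j → W (j + 1) ≤ W j := by
    intro j hj
    induction j with
    | zero => simpa [Nat.le_zero.mp hj] using hstab
    | succ j ih =>
      rcases Nat.lt_or_ge k0 (j+1) with hlt | hge
      · exact stab_step j (ih (by omega))
      · have : k0 = j + 1 := by omega
        subst this; exact hstab
  have Wle : ∀ m : ℕ, W m ≤ W (d - 1) := by
    intro m
    induction m with
    | zero => exact mono (Nat.zero_le _)
    | succ m ih =>
      rcases Nat.lt_or_ge m (d - 1) with hlt | hge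
      · exact mono (by omega)
      · exact (hstep m (by omega)).trans ih
  -- conclude
  intro w
  have hmem : wp M w *ᵥ x ∈ W (d - 1) := Wle w.length (memW w w.length le_rfl)
  have hker : ∀ y ∈ W (d - 1), u ⬝ᵥ y = 0 := by
    intro y hy
    induction hy using Submodule.span_induction with
    | mem y hy => obtain ⟨w', hw', rfl⟩ := hy; exact h w' hw'
    | zero => simp
    | add y z _ _ hy hz => rw [dotProduct_add, hy, hz, add_zero]
    | smul c y _ hy => rw [dotProduct_smul, hy, smul_zero]
  exact hker _ hmem

lemma prod_map_fromBlocks {A : Type*} {l : ℕ} (T1 T2 : A → Matrix (Fin l) (Fin l) ℝ)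
    (L : List A) :
    ((L.map fun a => fromBlocks (T1 a) 0 0 (T2 a)).prod : Matrix (Fin l ⊕ Fin l) (Fin l ⊕ Fin l) ℝ)
      = fromBlocks ((L.map T1).prod) 0 0 ((L.map T2).prod) := by
  induction L with
  | nil => simp [Matrix.fromBlocks_one]
  | cons a L ih =>
    simp only [List.map_cons, List.prod_cons, ih, Matrix.fromBlocks_multiply]
    simp

lemma wp_fromBlocks {A : Type*} {l : ℕ} (T1 T2 : A → Matrix (Fin l) (Fin l) ℝ)
    (w : List A) :
    wp (fun a => fromBlocks (T1 a) 0 0 (T2 a)) w = fromBlocks (wp T1 w) 0 0 (wp T2 w) :=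
  prod_map_fromBlocks T1 T2 w.reverse

/-- two `l`-dimensional series agreeing on words of length `≤ 2l - 1` agree everywhere. -/
lemma eq_of_agree_short {A : Type*} [Fintype A] {l : ℕ}
    (T1 T2 : A → Matrix (Fin l) (Fin l) ℝ) (π1 π2 : Fin l → ℝ)
    (h : ∀ w : List A, w.length ≤ 2 * l - 1 →
      (fun _ => (1:ℝ)) ⬝ᵥ (wp T1 w) *ᵥ π1 = (fun _ => (1:ℝ)) ⬝ᵥ (wp T2 w) *ᵥ π2) :
    ∀ w : List A,
      (fun _ => (1:ℝ)) ⬝ᵥ (wp T1 w) *ᵥ π1 = (fun _ => (1:ℝ)) ⬝ᵥ (wp T2 w) *ᵥ π2 := by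
  set M : A → Matrix (Fin l ⊕ Fin l) (Fin l ⊕ Fin l) ℝ :=
    fun a => fromBlocks (T1 a) 0 0 (T2 a) with hM
  set u : Fin l ⊕ Fin l → ℝ := Sum.elim (fun _ => (1:ℝ)) (fun _ => (-1:ℝ)) with hu
  set x : Fin l ⊕ Fin l → ℝ := Sum.elim π1 π2 with hxdef
  have card : Fintype.card (Fin l ⊕ Fin l) = 2 * l := by simp [two_mul]
  have key : ∀ w : List A, u ⬝ᵥ (wp M w) *ᵥ x =
      (fun _ => (1:ℝ)) ⬝ᵥ (wp T1 w) *ᵥ π1 - (fun _ => (1:ℝ)) ⬝ᵥ (wp T2 w) *ᵥ π2 := by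
    intro w
    rw [hM, wp_fromBlocks]
    rw [hxdef, Matrix.fromBlocks_mulVec]
    simp only [Sum.elim_comp_inl, Sum.elim_comp_inr, Matrix.zero_mulVec, add_zero, zero_add]
    rw [hu, sumElim_dotProduct_sumElim]
    have : ((fun _ => (-1:ℝ)) : Fin l → ℝ) ⬝ᵥ wp T2 w *ᵥ π2
        = -((fun _ => (1:ℝ)) ⬝ᵥ wp T2 w *ᵥ π2) := by
      simp [dotProduct]
    rw [this]; ring
  have hvan := vanish M u x (fun w hw => by
    rw [key w, sub_eq_zero]
    exact h w (by omega))
  intro w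
  have := hvan w
  rw [key w, sub_eq_zero] at this
  exact this

lemma agree_down {A : Type*} [Fintype A] (f g : List A → ℝ)
    (hf : ∀ v, ∑ a : A, f (v ++ [a]) = f v) (hg : ∀ v, ∑ a : A, g (v ++ [a]) = g v) :
    ∀ m : ℕ, (∀ v : List A, v.length = m → f v = g v) →
      ∀ k, k ≤ m → ∀ v : List A, v.length = k → f v = g v := by
  intro m
  induction m with
  | zero =>
    intro h k hk v hv
    have : k = 0 := Nat.le_zero.mp hk
    exact h v (this ▸ hv)
  | succ m ih =>
    intro h k hk v hv
    rcases Nat.lt_or_ge k (m + 1) with hlt | hge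
    · have hm : ∀ v : List A, v.length = m → f v = g v := by
        intro v hv
        rw [← hf v, ← hg v]
        exact Finset.sum_congr rfl fun a _ => h _ (by simp [hv])
      exact ih hm k (by omega) v hv
    · have hk1 : k = m + 1 := by omega
      exact h v (hk1 ▸ hv)





/-- marginal property at the level of the string function -/
lemma marginal_fn {A : Type*} [Fintype A] {l : ℕ} (q : List A → ℝ)
    (Am : Matrix (Fin l) (Fin l) ℝ) (E : Fin l → A → ℝ) (π : Fin l → ℝ)
    (hA : ∀ i, ∑ j, Am i j = 1) (hE : ∀ i, ∑ a : A, E i a = 1)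
    (hq : ∀ v : List A, q v = (fun _ => (1 : ℝ)) ⬝ᵥ
        (wordProd (fun a => Amᵀ * Matrix.diagonal fun i => E i a) v) *ᵥ π)
    (v : List A) : ∑ a : A, q (v ++ [a]) = q v := by
  simp only [hq, wordProd_eq_wp]
  exact marginal Am E hA hE π v


/-- For `l ≥ 1` and `n ≥ 2l`: a family `(p(u))_{u ∈ Σ^{n+1}}` extends to
a string function associated with an unconstrained hidden Markov process on `l` hidden
states iff each shifted family `(p(av))_{v ∈ Σⁿ}` and the marginal family
`(∑_a p(va))_{v ∈ Σⁿ}` do. -/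
theorem stmt13 {A : Type*} [Fintype A] [Nonempty A] (l n : ℕ)
    (hl : 1 ≤ l) (hn : 2 * l ≤ n) (p : List A → ℝ) :
    (∃ q : List A → ℝ, IsHMM l q ∧ ∀ u : List A, u.length = n + 1 → q u = p u) ↔
      ((∀ a : A, ∃ q : List A → ℝ, IsHMM l q ∧
          ∀ v : List A, v.length = n → q v = p (a :: v)) ∧
        (∃ q' : List A → ℝ, IsHMM l q' ∧
          ∀ v : List A, v.length = n → q' v = ∑ a : A, p (v ++ [a]))) := by
  constructor
  · rintro ⟨q, ⟨Am, E, π, hA0, hA1, hE0, hE1, hπ0, hq⟩, hagree⟩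
    constructor
    · intro a
      refine ⟨fun v => (fun _ => (1 : ℝ)) ⬝ᵥ
          (wordProd (fun b => Amᵀ * Matrix.diagonal fun i => E i b) v) *ᵥ
          ((Amᵀ * Matrix.diagonal fun i => E i a) *ᵥ π),
        ⟨Am, E, (Amᵀ * Matrix.diagonal fun i => E i a) *ᵥ π,
          hA0, hA1, hE0, hE1, ?_, fun v => rfl⟩, ?_⟩
      · intro i
        rw [Matrix.mulVec]
        refine Finset.sum_nonneg fun j _ => ?_
        simp only [Matrix.mul_diagonal, Matrix.transpose_apply]
        exact mul_nonneg (mul_nonneg (hA0 j i) (hE0 j a)) (hπ0 j)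
      · intro v hv
        have h1 : q (a :: v) = p (a :: v) := hagree _ (by simp [hv])
        rw [← h1, hq (a :: v)]
        simp only [wordProd_eq_wp, wp_cons, ← Matrix.mulVec_mulVec]
    · refine ⟨q, ⟨Am, E, π, hA0, hA1, hE0, hE1, hπ0, hq⟩, ?_⟩
      intro v hv
      rw [← marginal_fn q Am E π hA1 hE1 hq v]
      exact Finset.sum_congr rfl fun a _ => hagree _ (by simp [hv])
  · rintro ⟨hi, q', ⟨A', E', π', hA0', hA1', hE0', hE1', hπ0', hq'⟩, hii⟩
    choose qa hqaHMM hqa using hi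
    choose Aa Ea πa h1 h2 h3 h4 h5 h6 using hqaHMM
    have hn1 : 1 ≤ n := by omega
    -- Step 1 : q' (a :: t) = qa a t for t of length n - 1
    have step1 : ∀ (a : A) (t : List A), t.length = n - 1 → q' (a :: t) = qa a t := by
      intro a t ht
      have hlen : (a :: t).length = n := by simp [ht]; omega
      rw [hii _ hlen]
      have : ∀ b : A, p ((a :: t) ++ [b]) = qa a (t ++ [b]) := by
        intro b
        have : ((a :: t) ++ [b] : List A) = a :: (t ++ [b]) := by simp
        rw [this, ← hqa a (t ++ [b]) (by simp [ht]; omega)]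
      rw [Finset.sum_congr rfl fun b _ => this b]
      exact marginal_fn (qa a) (Aa a) (Ea a) (πa a) (h2 a) (h4 a) (h6 a) t
    -- Step 2 : q' (a :: v) = qa a v for ALL v
    have step2 : ∀ (a : A) (v : List A), q' (a :: v) = qa a v := by
      intro a
      set T' := fun b : A => A'ᵀ * Matrix.diagonal fun i => E' i b with hT'
      have hshift : ∀ v : List A, q' (a :: v) =
          (fun _ => (1:ℝ)) ⬝ᵥ (wp T' v) *ᵥ (T' a *ᵥ π') := by
        intro v
        rw [hq' (a :: v), wordProd_eq_wp, wp_cons, ← Matrix.mulVec_mulVec]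
      have hqa_fn : ∀ v : List A, qa a v =
          (fun _ => (1:ℝ)) ⬝ᵥ
            (wp (fun b => (Aa a)ᵀ * Matrix.diagonal fun i => Ea a i b) v) *ᵥ πa a := by
        intro v
        rw [h6 a v, wordProd_eq_wp]
      -- the two formulas agree on all lengths ≤ n - 1
      have hag : ∀ k, k ≤ n - 1 → ∀ v : List A, v.length = k →
          (fun v => (fun _ => (1:ℝ)) ⬝ᵥ (wp T' v) *ᵥ (T' a *ᵥ π')) v =
          (fun v => (fun _ => (1:ℝ)) ⬝ᵥ
            (wp (fun b => (Aa a)ᵀ * Matrix.diagonal fun i => Ea a i b) v) *ᵥ πa a) v := by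
        refine agree_down _ _ ?_ ?_ (n - 1) ?_
        · intro v; exact marginal A' E' hA1' hE1' (T' a *ᵥ π') v
        · intro v; exact marginal (Aa a) (Ea a) (h2 a) (h4 a) (πa a) v
        · intro v hv
          have := step1 a v hv
          rw [hshift v, hqa_fn v] at this
          exact this
      have := eq_of_agree_short T' (fun b => (Aa a)ᵀ * Matrix.diagonal fun i => Ea a i b)
        (T' a *ᵥ π') (πa a)
        (fun w hw => hag w.length (by omega) w rfl)
      intro v
      rw [hshift v, hqa_fn v]
      exact this v
    refine ⟨q', ⟨A', E', π', hA0', hA1', hE0', hE1', hπ0', hq'⟩, ?_⟩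
    intro u hu
    cases u with
    | nil => simp at hu
    | cons a v =>
      have hv : v.length = n := by simpa using hu
      rw [step2 a v, hqa a v hv]
end

section
/- Let Σ be a finite alphabet with l := |Σ|, let n ≥ 2l−1, and let (p(v))_{v∈Σ^n} be a family of nonnegative reals; extend p to all strings u with |u| < n by p(u) := Σ_{w∈Σ^{n−|u|}} p(uw). Then there exist π ∈ ℂ^Σ and M ∈ ℂ^{Σ×Σ} with Σ_{b∈Σ} M_{ab} = 1 for each a ∈ Σ such that p(a_1…a_n) = π(a_1) ∏_{i=2}^n M_{a_{i−1}a_i} for all a_1…a_n ∈ Σ^n, if and only if det [[p(vau), p(wau)], [p(vau'), p(wau')]] = p(vau)p(wau') − p(wau)p(vau') = 0 for all choices of u, u', v, w ∈ Σ* and a ∈ Σ with |vau|, |vau'|, |wau|, |wau'| ≤ n. -/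
/-- The weight `∏_{i=2}^n M_{a_{i−1} a_i}` of the path `a :: t` through the transition
matrix `M`, starting at `a`. -/
def markovWeight {A R : Type*} [Mul R] [One R] (M : Matrix A A R) : A → List A → R
  | _, [] => 1
  | a, b :: t => M a b * markovWeight M b t

private lemma mw_snoc {A : Type*} (M : Matrix A A ℂ) (t : List A) :
    ∀ a b : A, markovWeight M a (t ++ [b]) =
        markovWeight M a t * M ((a :: t).getLast (List.cons_ne_nil a t)) b := by
  induction t with
  | nil => intro a b; simp [markovWeight]
  | cons c t ih =>
    intro a b
    rw [List.cons_append]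
    show M a c * markovWeight M c (t ++ [b]) = M a c * markovWeight M c t * _
    rw [ih c b, List.getLast_cons (List.cons_ne_nil c t)]
    ring

private lemma mw_split {A : Type*} (M : Matrix A A ℂ) (t₁ : List A) :
    ∀ (a c : A) (t₂ : List A),
      markovWeight M a (t₁ ++ c :: t₂) = markovWeight M a (t₁ ++ [c]) * markovWeight M c t₂ := by
  induction t₁ with
  | nil => intro a c t₂; simp [markovWeight]
  | cons d t₁ ih =>
    intro a c t₂
    rw [List.cons_append, List.cons_append]
    show M a d * markovWeight M d (t₁ ++ c :: t₂) = M a d * markovWeight M d (t₁ ++ [c]) * _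
    rw [ih d c t₂]
    ring

/-- Let `l = |Σ|`, `n ≥ 2l−1`, and let `(p(v))_{v ∈ Σⁿ}` be nonnegative,
extended to shorter strings by `p(u) = ∑_{w ∈ Σ^{n−|u|}} p(uw)`. Then `(p(v))_{v ∈ Σⁿ}`
lies in the image of the (complex) Markov model — i.e. there are `π ∈ ℂ^Σ` and
`M ∈ ℂ^{Σ×Σ}` with row sums `1` such that `p(a₁…aₙ) = π(a₁) ∏_{i=2}^n M_{a_{i−1}a_i}` on
`Σⁿ` — iff `p(vau)·p(wau') − p(wau)·p(vau') = 0` for all `u,u',v,w ∈ Σ*`, `a ∈ Σ` with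
`|vau|, |vau'|, |wau|, |wau'| ≤ n`. -/
theorem stmt15 {A : Type*} [Fintype A] [Nonempty A] (n : ℕ)
    (hn : 2 * Fintype.card A - 1 ≤ n)
    (p : List A → ℝ)
    (hnonneg : ∀ v : List A, v.length = n → 0 ≤ p v)
    (hext : ∀ u : List A, u.length < n →
      p u = ∑ f : Fin (n - u.length) → A, p (u ++ List.ofFn f)) :
    (∃ (π : A → ℂ) (M : Matrix A A ℂ),
        (∀ a, ∑ b : A, M a b = 1) ∧
        ∀ (a : A) (t : List A), (a :: t).length = n →
          (p (a :: t) : ℂ) = π a * markovWeight M a t) ↔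
      (∀ (u u' v w : List A) (a : A),
        (v ++ a :: u).length ≤ n → (v ++ a :: u').length ≤ n →
        (w ++ a :: u).length ≤ n → (w ++ a :: u').length ≤ n →
        p (v ++ a :: u) * p (w ++ a :: u') - p (w ++ a :: u) * p (v ++ a :: u') = 0) := by
  classical
  have hn1 : 1 ≤ n := by
    have := Fintype.card_pos (α := A)
    omega
  have hext' : ∀ u : List A, u.length ≤ n →
      p u = ∑ f : Fin (n - u.length) → A, p (u ++ List.ofFn f) := by
    intro u hu
    rcases lt_or_eq_of_le hu with h | h
    · exact hext u h
    · have h0 : n - u.length = 0 := by omega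
      rw [h0]
      simp
  have hnonneg' : ∀ u : List A, u.length ≤ n → 0 ≤ p u := by
    intro u hu
    rw [hext' u hu]
    refine Finset.sum_nonneg fun f _ => hnonneg _ ?_
    simp; omega
  have hstep : ∀ u : List A, u.length < n → p u = ∑ b : A, p (u ++ [b]) := by
    intro u hu
    obtain ⟨m, hm⟩ : ∃ m, n - u.length = m + 1 := ⟨n - u.length - 1, by omega⟩
    rw [hext u hu, hm]
    rw [← (Fin.consEquiv (fun _ : Fin (m + 1) => A)).sum_comp]
    rw [Fintype.sum_prod_type]
    refine Finset.sum_congr rfl fun b _ => ?_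
    have hmb : n - (u ++ [b]).length = m := by simp; omega
    rw [hext' (u ++ [b]) (by simp; omega), hmb]
    refine Finset.sum_congr rfl fun g _ => ?_
    congr 1
    simp [Fin.consEquiv, List.ofFn_succ]
  constructor
  · -- Forward direction
    rintro ⟨π, M, hrow, hp⟩
    have L1 : ∀ (k : ℕ) (a : A) (t : List A), (a :: t).length + k = n →
        (p (a :: t) : ℂ) = π a * markovWeight M a t := by
      intro k
      induction k with
      | zero => intro a t h; exact hp a t (by omega)
      | succ k ih =>
        intro a t h
        have hlt : (a :: t).length < n := by omega
        calc (p (a :: t) : ℂ) = ∑ b : A, (p (a :: (t ++ [b])) : ℂ) := by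
              rw [hstep (a :: t) hlt]; push_cast; simp [List.cons_append]
          _ = ∑ b : A, π a * markovWeight M a (t ++ [b]) := by
              refine Finset.sum_congr rfl fun b _ => ih a (t ++ [b]) ?_
              simp at h ⊢; omega
          _ = π a * markovWeight M a t := by
              simp only [mw_snoc, ← mul_assoc]
              rw [← Finset.mul_sum, hrow, mul_one]
    have L2 : ∀ (v : List A) (a : A) (u : List A), (v ++ a :: u).length ≤ n →
        (p (v ++ a :: u) : ℂ) = (p (v ++ [a]) : ℂ) * markovWeight M a u := by
      intro v a u h
      cases v with
      | nil =>
        simp only [List.nil_append]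
        rw [L1 (n - (a :: u).length) a u (by simp at h ⊢; omega),
          L1 (n - 1) a [] (by simp; omega)]
        simp [markovWeight]
      | cons c v' =>
        simp only [List.cons_append] at h ⊢
        rw [L1 (n - (c :: (v' ++ a :: u)).length) c (v' ++ a :: u) (by simp at h ⊢; omega),
          L1 (n - (c :: (v' ++ [a])).length) c (v' ++ [a]) (by simp at h ⊢; omega),
          mw_split]
        ring
    intro u u' v w a h1 h2 h3 h4
    have key : ((p (v ++ a :: u) * p (w ++ a :: u')
        - p (w ++ a :: u) * p (v ++ a :: u') : ℝ) : ℂ) = 0 := by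
      push_cast
      rw [L2 v a u h1, L2 w a u' h4, L2 w a u h3, L2 v a u' h2]
      ring
    exact_mod_cast key
  · -- Backward direction
    intro hdet
    have hM : ∀ a : A, ∃ row : A → ℝ, (∑ b : A, row b = 1) ∧
        (∀ (v : List A) (b : A), v.length + 2 ≤ n → p (v ++ [a]) ≠ 0 →
          p ((v ++ [a]) ++ [b]) = p (v ++ [a]) * row b) := by
      intro a
      by_cases h : ∃ v : List A, v.length + 2 ≤ n ∧ p (v ++ [a]) ≠ 0
      · obtain ⟨v₀, hv₀, hp₀⟩ := h
        refine ⟨fun b => p (v₀ ++ [a, b]) / p (v₀ ++ [a]), ?_, ?_⟩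
        · rw [← Finset.sum_div]
          have hrec : ∀ b : A, v₀ ++ [a, b] = (v₀ ++ [a]) ++ [b] := by
            intro b; simp
          have : ∑ b : A, p (v₀ ++ [a, b]) = p (v₀ ++ [a]) := by
            rw [hstep (v₀ ++ [a]) (by simp; omega)]
            exact Finset.sum_congr rfl fun b _ => by rw [hrec b]
          rw [this, div_self hp₀]
        · intro v b hlen hpv
          have hd := hdet [b] [] v v₀ a (by simp; omega) (by simp; omega)
            (by simp; omega) (by simp; omega)
          have hrw1 : v ++ a :: [b] = (v ++ [a]) ++ [b] := by simp
          have hrw2 : v₀ ++ a :: [b] = v₀ ++ [a, b] := by simp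
          have hrw3 : v ++ a :: ([] : List A) = v ++ [a] := by simp
          have hrw4 : v₀ ++ a :: ([] : List A) = v₀ ++ [a] := by simp
          rw [hrw1, hrw2, hrw3, hrw4] at hd
          rw [mul_div_assoc']
          rw [eq_div_iff hp₀]
          linear_combination hd
      · push_neg at h
        refine ⟨fun _ => (Fintype.card A : ℝ)⁻¹, ?_, ?_⟩
        · rw [Finset.sum_const, Finset.card_univ, nsmul_eq_mul]
          rw [mul_inv_cancel₀]
          exact_mod_cast Fintype.card_ne_zero
        · intro v b hlen hpv
          exact absurd (h v hlen) hpv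
    choose row hrow1 hrow2 using hM
    set M : Matrix A A ℂ := fun a b => ((row a b : ℝ) : ℂ) with hMdef
    have hkey : ∀ (s : List A) (hs : s ≠ []) (b : A), s.length < n →
        p (s ++ [b]) = p s * row (s.getLast hs) b := by
      intro s hs b hlen
      by_cases hp0 : p s = 0
      · rw [hp0, zero_mul]
        have hsum := hstep s hlen
        rw [hp0] at hsum
        have hz := (Finset.sum_eq_zero_iff_of_nonneg
          (fun c _ => hnonneg' (s ++ [c]) (by simp; omega))).mp hsum.symm
        exact hz b (Finset.mem_univ b)
      · set a := s.getLast hs with ha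
        have hdrop : s.dropLast ++ [a] = s := List.dropLast_append_getLast hs
        have hlen' : s.dropLast.length + 2 ≤ n := by
          have h1 : s.dropLast.length = s.length - 1 := List.length_dropLast
          have h2 : 0 < s.length := List.length_pos_iff.mpr hs
          omega
        have := hrow2 a s.dropLast b hlen' (by rw [hdrop]; exact hp0)
        rw [hdrop] at this
        exact this
    refine ⟨fun a => (p [a] : ℂ), M, ?_, ?_⟩
    · intro a
      have : ∑ b : A, M a b = ((∑ b : A, row a b : ℝ) : ℂ) := by
        push_cast [hMdef]; rfl
      rw [this, hrow1 a]
      norm_num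
    · have hmain : ∀ (t : List A) (a : A), (a :: t).length ≤ n →
          (p (a :: t) : ℂ) = (p [a] : ℂ) * markovWeight M a t := by
        intro t
        induction t using List.reverseRecOn with
        | nil => intro a h; simp [markovWeight]
        | append_singleton t b ih =>
          intro a h
          have hlen : (a :: t).length < n := by simp at h ⊢; omega
          have hk := hkey (a :: t) (List.cons_ne_nil a t) b hlen
          have hc : a :: (t ++ [b]) = (a :: t) ++ [b] := by simp
          rw [hc, hk]
          push_cast
          rw [ih a (le_of_lt hlen), mw_snoc]
          show _ = (p [a] : ℂ) * (markovWeight M a t * ((row ((a :: t).getLast _) b : ℝ) : ℂ))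
          ring
      intro a t hlen
      exact hmain t a (le_of_eq hlen)
end
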